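/- arXiv:1908.02968 — 12 statements merged into one kernel-verified Lean document; each statement's English description precedes it below -/
import Mathlib

section
/- Let R be a nontrivial commutative ring and G an abelian group, and let RG be the group ring. Then the nilradical of RG equals Φ(N) for some nontrivial subgroup N of G if and only if R is reduced and there exists a prime number p such that the characteristic of R is p and G contains an element of order p. -/
/-- `Phi R N` is the ideal of the group ring `MonoidAlgebra R G` generated by the
elements `n - 1` with `n ∈ N`, i.e. the extension of the augmentation ideal of `RN`. -/
noncomputable def Phi (R : Type*) {G : Type*} [CommRing R] [CommGroup G] (N : Subgroup G) :
    Ideal (MonoidAlgebra R G) :=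
  Ideal.span ((fun n => MonoidAlgebra.of R G n - 1) '' (N : Set G))

namespace PhiAux

open MonoidAlgebra

variable {R G : Type*} [CommRing R] [CommGroup G]

/-- The subgroup of elements of `p`-power order. -/
def pTors (G : Type*) [CommGroup G] (p : ℕ) : Subgroup G where
  carrier := {g | ∃ n : ℕ, g ^ p ^ n = 1}
  one_mem' := ⟨0, one_pow _⟩
  mul_mem' := by
    rintro a b ⟨m, hm⟩ ⟨n, hn⟩
    refine ⟨m + n, ?_⟩
    rw [mul_pow, pow_add, pow_mul, hm, one_pow, one_mul, mul_comm (p^m), pow_mul, hn, one_pow]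
  inv_mem' := by
    rintro a ⟨n, hn⟩
    exact ⟨n, by rw [inv_pow, hn, inv_one]⟩

lemma maCharP (p : ℕ) [CharP R p] : CharP (MonoidAlgebra R G) p :=
  charP_of_injective_ringHom (f := (singleOneRingHom : R →+* MonoidAlgebra R G))
    (single_right_injective (R := R) (m := (1 : G))) p

lemma ma_pow_p (p : ℕ) (hp : p.Prime) [CharP R p] (x : MonoidAlgebra R G) :
    x ^ p = x.coeff.sum fun g r => single (g ^ p) (r ^ p) := by
  haveI := maCharP (R := R) (G := G) p
  haveI : Fact p.Prime := ⟨hp⟩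
  conv_lhs => rw [← MonoidAlgebra.sum_coeff_single x]
  rw [show (x.coeff.sum single) ^ p = frobenius (MonoidAlgebra R G) p (x.coeff.sum single) from rfl]
  rw [map_finsuppSum]
  exact Finsupp.sum_congr fun g _ => by
    rw [frobenius_def, MonoidAlgebra.single_pow]

lemma ma_isReduced (p : ℕ) (hp : p.Prime) [CharP R p] [IsReduced R]
    (hG : ∀ g : G, g ^ p = 1 → g = 1) : IsReduced (MonoidAlgebra R G) := by
  have hinj : Function.Injective fun g : G => g ^ p := by
    intro a b h
    have h1 : (a * b⁻¹) ^ p = 1 := by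
      simp only at h
      rw [mul_pow, inv_pow, h, mul_inv_cancel]
    have := hG _ h1
    rwa [mul_inv_eq_one] at this
  have key : ∀ x : MonoidAlgebra R G, x ^ p = 0 → x = 0 := by
    intro x hx
    classical
    rw [ma_pow_p p hp x] at hx
    ext g0
    have h0 : (x.coeff.sum fun g r => (single (g ^ p) (r ^ p) : MonoidAlgebra R G)).coeff (g0 ^ p) = 0 := by
      rw [hx]; rfl
    rw [coeff_finsuppSum, Finsupp.sum_apply] at h0
    have h1 : (x.coeff.sum fun g r => (single (g ^ p) (r ^ p) : MonoidAlgebra R G).coeff (g0 ^ p)) =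
        x.coeff.sum fun g r => if g = g0 then r ^ p else 0 := by
      refine Finsupp.sum_congr fun g _ => ?_
      rw [coeff_single, Finsupp.single_apply]
      exact if_congr hinj.eq_iff rfl rfl
    rw [h1, Finsupp.sum] at h0
    rw [Finset.sum_ite_eq' x.coeff.support g0 (fun g => x.coeff g ^ p)] at h0
    have h2 : x.coeff g0 ^ p = 0 := by
      by_cases hmem : g0 ∈ x.coeff.support
      · rwa [if_pos hmem] at h0
      · rw [Finsupp.notMem_support_iff.mp hmem, zero_pow hp.ne_zero]
    have : x.coeff g0 = 0 := IsReduced.eq_zero _ ⟨p, h2⟩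
    simpa using this
  have key2 : ∀ k, ∀ x : MonoidAlgebra R G, x ^ p ^ k = 0 → x = 0 := by
    intro k
    induction k with
    | zero => intro x h; simpa using h
    | succ k ih =>
      intro x h
      refine key x (ih (x ^ p) ?_)
      rw [← pow_mul, ← pow_succ']
      exact h
  constructor
  rintro x ⟨n, hn⟩
  refine key2 n x ?_
  have hle : n ≤ p ^ n := (Nat.lt_pow_self (n := n) hp.one_lt).le
  calc x ^ p ^ n = x ^ n * x ^ (p ^ n - n) := by rw [← pow_add, Nat.add_sub_cancel' hle]
  _ = 0 := by rw [hn, zero_mul]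

lemma ker_le_Phi (N : Subgroup G) (x : MonoidAlgebra R G)
    (hx : MonoidAlgebra.mapDomain (QuotientGroup.mk' N) x = 0) : x ∈ Phi R N := by
  set s : G ⧸ N → G := Quotient.out with hs
  have hsec : ∀ q : G ⧸ N, QuotientGroup.mk' N (s q) = q := fun q => QuotientGroup.out_eq' q
  set θ : MonoidAlgebra R G → MonoidAlgebra R G :=
    fun y => MonoidAlgebra.mapDomain (fun g => s (QuotientGroup.mk' N g)) y with hθ
  have claim1 : ∀ y : MonoidAlgebra R G, y - θ y ∈ Phi R N := by
    intro y
    induction y using MonoidAlgebra.induction_on with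
    | of g =>
      have hof : θ (of R G g) = single (s (QuotientGroup.mk' N g)) 1 := by
        rw [hθ]
        exact MonoidAlgebra.mapDomain_single
      rw [hof]
      set a := s (QuotientGroup.mk' N g) with ha
      have hn : a⁻¹ * g ∈ N := by
        rw [← QuotientGroup.eq_one_iff]
        rw [show ((a⁻¹ * g : G) : G ⧸ N) = (QuotientGroup.mk' N a)⁻¹ * QuotientGroup.mk' N g
          from by rfl]
        rw [ha, hsec]
        simp
      have hfact : (of R G g : MonoidAlgebra R G) - single a 1
          = (MonoidAlgebra.of R G (a⁻¹ * g) - 1) * single a 1 := by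
        rw [sub_mul, MonoidAlgebra.of_apply, MonoidAlgebra.of_apply,
          MonoidAlgebra.single_mul_single, one_mul, one_mul,
          mul_comm a⁻¹ g, mul_assoc, inv_mul_cancel, mul_one]
      rw [hfact]
      exact Ideal.mul_mem_right _ _ (Ideal.subset_span ⟨a⁻¹ * g, hn, rfl⟩)
    | add f1 f2 h1 h2 =>
      have : θ (f1 + f2) = θ f1 + θ f2 := MonoidAlgebra.mapDomain_add _ _ _
      rw [this, show f1 + f2 - (θ f1 + θ f2) = (f1 - θ f1) + (f2 - θ f2) from by abel]
      exact (Phi R N).add_mem h1 h2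
    | smul r f h =>
      have : θ (r • f) = r • θ f := MonoidAlgebra.mapDomain_smul _ r f
      rw [this, ← smul_sub, Algebra.smul_def]
      exact Ideal.mul_mem_left _ _ h
  have h2 : θ x = 0 := by
    rw [hθ]
    dsimp only
    rw [show (fun g => s (QuotientGroup.mk' N g)) = s ∘ (QuotientGroup.mk' N) from rfl]
    show MonoidAlgebra.ofCoeff (Finsupp.mapDomain (s ∘ (QuotientGroup.mk' N)) x.coeff) = 0
    rw [Finsupp.mapDomain_comp, show Finsupp.mapDomain (QuotientGroup.mk' N) x.coeff = 0 from
      congrArg MonoidAlgebra.coeff hx, Finsupp.mapDomain_zero]; rfl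
  have := claim1 x
  rwa [h2, sub_zero] at this

omit [CommGroup G] in
lemma sum_single_apply {ι : Type*} [DecidableEq G] (s : Finset ι) (a : ι → G) (c : ι → R)
    (t : G) :
    (∑ i ∈ s, (single (a i) (c i) : MonoidAlgebra R G)).coeff t
      = ∑ i ∈ s, if a i = t then c i else 0 := by
  induction s using Finset.cons_induction with
  | empty => rfl
  | cons i s his ih =>
    rw [Finset.sum_cons, Finset.sum_cons, ← ih, ← Finsupp.single_apply]
    exact Finsupp.add_apply _ _ _

lemma key_char [Nontrivial R] {g : G} (hg : g ≠ 1) {q : ℕ} (hq : g ^ q = 1)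
    (hnil : IsNilpotent (MonoidAlgebra.of R G g - 1)) : ∃ K : ℕ, ((q : R)) ^ K = 0 := by
  classical
  obtain ⟨K, hK⟩ := hnil
  set x : MonoidAlgebra R G := MonoidAlgebra.of R G g with hxdef
  set ν : MonoidAlgebra R G := x - 1 with hν
  have hxq : x ^ q = 1 := by rw [hxdef, ← map_pow, hq, map_one]
  set ρ : MonoidAlgebra R G := ∑ i ∈ Finset.range q, ∑ j ∈ Finset.range i, x ^ j with hρ
  have h2 : (∑ i ∈ Finset.range q, x ^ i) = (q : MonoidAlgebra R G) + ρ * ν := by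
    rw [hρ, Finset.sum_mul]
    have hterm : ∀ i ∈ Finset.range q, x ^ i = 1 + (∑ j ∈ Finset.range i, x ^ j) * ν := by
      intro i _
      rw [hν, geom_sum_mul]
      ring
    rw [Finset.sum_congr rfl hterm, Finset.sum_add_distrib, Finset.sum_const, Finset.card_range,
      nsmul_eq_mul, mul_one]
  have h1 : ν * (∑ i ∈ Finset.range q, x ^ i) = 0 := by
    rw [mul_comm, hν, geom_sum_mul, hxq, sub_self]
  rw [h2] at h1
  have h3 : (q : MonoidAlgebra R G) * ν = -ρ * ν ^ 2 := by linear_combination h1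
  have h4 : ∀ j : ℕ, (q : MonoidAlgebra R G) ^ j * ν = (-ρ) ^ j * ν ^ (j + 1) := by
    intro j
    induction j with
    | zero => simp
    | succ j ih =>
      calc (q:MonoidAlgebra R G)^(j+1) * ν
          = (q:MonoidAlgebra R G)^j * ((q:MonoidAlgebra R G) * ν) := by ring
        _ = (q:MonoidAlgebra R G)^j * (-ρ * ν^2) := by rw [h3]
        _ = (-ρ) * ν * ((q:MonoidAlgebra R G)^j * ν) := by ring
        _ = (-ρ) * ν * ((-ρ)^j * ν^(j+1)) := by rw [ih]
        _ = (-ρ)^(j+1) * ν^(j+1+1) := by ring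
  have h5 : (q : MonoidAlgebra R G) ^ K * ν = 0 := by
    rw [h4 K, pow_succ, hK, zero_mul, mul_zero]
  have hcast : (q : MonoidAlgebra R G) ^ K = single (1 : G) ((q:R)^K) := by
    rw [MonoidAlgebra.natCast_def, MonoidAlgebra.single_pow, one_pow]
  have h6 : (single (1 : G) ((q:R)^K) : MonoidAlgebra R G) * ν
      = single g ((q:R)^K) - single 1 ((q:R)^K) := by
    rw [hν, hxdef, MonoidAlgebra.of_apply, mul_sub, MonoidAlgebra.single_mul_single, one_mul,
      mul_one, mul_one]
  have h7 : (single g ((q:R)^K) : MonoidAlgebra R G) = single 1 ((q:R)^K) :=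
    sub_eq_zero.mp (by rw [← h6, ← hcast, h5])
  rcases MonoidAlgebra.single_inj.mp h7 with ⟨hga, _⟩ | ⟨hc, _⟩
  · exact absurd hga hg
  · exact ⟨K, hc⟩

lemma finite_order [Nontrivial R] {g : G}
    (hnil : IsNilpotent (MonoidAlgebra.of R G g - 1)) : IsOfFinOrder g := by
  classical
  by_contra hinf
  have hinj : Function.Injective fun n : ℕ => g ^ n :=
    injective_pow_iff_not_isOfFinOrder.mpr hinf
  obtain ⟨k, hk⟩ := hnil
  rw [sub_pow] at hk
  have hneg : (-1 : MonoidAlgebra R G) = single (1:G) (-1:R) := by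
    rw [MonoidAlgebra.one_def]
    exact (MonoidAlgebra.single_neg (1:G) (1:R)).symm
  have hconv : ∀ m ∈ Finset.range (k+1),
      ((-1 : MonoidAlgebra R G) ^ (m + k) * (MonoidAlgebra.of R G g) ^ m * 1 ^ (k - m)
        * (k.choose m : MonoidAlgebra R G))
      = single (g ^ m) (((-1:R) ^ (m + k)) * (k.choose m : R)) := by
    intro m _
    rw [MonoidAlgebra.of_apply, MonoidAlgebra.natCast_def, hneg,
      MonoidAlgebra.single_pow, MonoidAlgebra.single_pow, one_pow, one_pow, one_pow, mul_one,
      MonoidAlgebra.single_mul_single, MonoidAlgebra.single_mul_single, one_mul, mul_one,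
      mul_one]
  rw [Finset.sum_congr rfl hconv] at hk
  have h8 := congrArg (fun z : MonoidAlgebra R G => z.coeff (g ^ k)) hk
  rw [sum_single_apply (Finset.range (k+1)) (fun m => g ^ m)
    (fun m => ((-1:R) ^ (m + k)) * (k.choose m : R)) (g ^ k)] at h8
  simp only [hinj.eq_iff] at h8
  rw [Finset.sum_ite_eq' (Finset.range (k+1)) k] at h8
  have hzero : ((0 : MonoidAlgebra R G)).coeff (g ^ k) = 0 := rfl
  rw [hzero] at h8
  simp only [Finset.mem_range, Nat.lt_succ_self, if_pos, Nat.choose_self, Nat.cast_one,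
    mul_one] at h8
  have heven : ((-1:R) ^ (k + k)) = 1 := Even.neg_one_pow ⟨k, rfl⟩
  rw [heven] at h8
  exact one_ne_zero h8

end PhiAux

open MonoidAlgebra PhiAux in
theorem stmt0 (R G : Type*) [CommRing R] [Nontrivial R] [CommGroup G] :
    (∃ N : Subgroup G, N ≠ ⊥ ∧ nilradical (MonoidAlgebra R G) = Phi R N) ↔
      (IsReduced R ∧ ∃ p : ℕ, p.Prime ∧ CharP R p ∧ ∃ g : G, orderOf g = p) := by
  constructor
  · rintro ⟨N, hN, hnil⟩
    -- the augmentation map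
    set ε : MonoidAlgebra R G →ₐ[R] R := MonoidAlgebra.lift R R G 1 with hε
    have hPhiKer : ∀ z ∈ Phi R N, ε z = 0 := by
      intro z hz
      have : Phi R N ≤ Ideal.comap ε.toRingHom (⊥ : Ideal R) := by
        rw [Phi, Ideal.span_le]
        rintro _ ⟨n, hn, rfl⟩
        simp only [Set.mem_setOf_eq, SetLike.mem_coe, Ideal.mem_comap, Ideal.mem_bot]
        rw [map_sub, map_one, AlgHom.toRingHom_eq_coe, RingHom.coe_coe, MonoidAlgebra.lift_of]
        simp
      simpa using this hz
    have hred : IsReduced R := by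
      rw [isReduced_iff]
      rintro r ⟨n, hn⟩
      have hnr : IsNilpotent (single (1:G) r : MonoidAlgebra R G) :=
        ⟨n, by rw [MonoidAlgebra.single_pow, one_pow, hn]; exact MonoidAlgebra.single_zero 1⟩
      have hmem : (single (1:G) r : MonoidAlgebra R G) ∈ Phi R N := by
        rw [← hnil]; exact hnr
      have := hPhiKer _ hmem
      rwa [hε, MonoidAlgebra.lift_single, MonoidHom.one_apply, smul_eq_mul, mul_one] at this
    refine ⟨hred, ?_⟩
    obtain ⟨g0, hg0N, hg0⟩ := (N.bot_or_exists_ne_one).resolve_left hN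
    have hν : IsNilpotent (MonoidAlgebra.of R G g0 - 1) := by
      rw [← mem_nilradical, hnil]
      exact Ideal.subset_span ⟨g0, hg0N, rfl⟩
    have hfin : IsOfFinOrder g0 := finite_order hν
    set m : ℕ := orderOf g0 with hm
    have hm0 : m ≠ 0 := (orderOf_pos_iff.mpr hfin).ne'
    have hm1 : m ≠ 1 := by
      intro h
      exact hg0 (orderOf_eq_one_iff.mp h)
    set q : ℕ := m.minFac with hqdef
    have hqp : q.Prime := Nat.minFac_prime hm1
    have hqd : q ∣ m := Nat.minFac_dvd m
    set d : ℕ := m / q with hd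
    have hdm : d ∣ m := Nat.div_dvd_of_dvd hqd
    have hd0 : d ≠ 0 := by
      rw [hd]
      exact Nat.div_ne_zero_iff.mpr ⟨hqp.ne_zero, Nat.le_of_dvd (Nat.pos_of_ne_zero hm0) hqd⟩
    set h : G := g0 ^ d with hhdef
    have horder : orderOf h = q := by
      rw [hhdef, orderOf_pow' g0 hd0, ← hm, Nat.gcd_eq_right hdm, hd,
        Nat.div_div_self hqd hm0]
    have hh1 : h ≠ 1 := by
      intro hcon
      rw [hcon, orderOf_one] at horder
      exact hqp.one_lt.ne horder
    have hνh : IsNilpotent (MonoidAlgebra.of R G h - 1) := by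
      have hfac : MonoidAlgebra.of R G h - 1
          = (∑ i ∈ Finset.range d, (MonoidAlgebra.of R G g0) ^ i)
            * (MonoidAlgebra.of R G g0 - 1) := by
        rw [geom_sum_mul, ← map_pow, hhdef]
      rw [hfac]
      exact Commute.isNilpotent_mul_left (Commute.all _ _) hν
    have hhq : h ^ q = 1 := by rw [← horder]; exact pow_orderOf_eq_one h
    obtain ⟨K, hK⟩ := key_char hh1 hhq hνh
    have hq0 : (q : R) = 0 := IsReduced.eq_zero _ ⟨K, hK⟩
    haveI : CharP R q := (CharP.charP_iff_prime_eq_zero hqp).mpr hq0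
    exact ⟨q, hqp, inferInstance, h, horder⟩
  · rintro ⟨hred, p, hp, hchar, g, hg⟩
    haveI := hchar
    haveI : Fact p.Prime := ⟨hp⟩
    haveI := maCharP (R := R) (G := G) p
    refine ⟨pTors G p, ?_, ?_⟩
    · intro hbot
      have hgmem : g ∈ pTors G p := ⟨1, by rw [pow_one, ← hg]; exact pow_orderOf_eq_one g⟩
      rw [hbot, Subgroup.mem_bot] at hgmem
      rw [hgmem, orderOf_one] at hg
      exact hp.one_lt.ne hg
    · apply le_antisymm
      · -- nilradical ≤ Phi
        intro x hx
        rw [mem_nilradical] at hx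
        have hQ : ∀ qq : G ⧸ pTors G p, qq ^ p = 1 → qq = 1 := by
          intro qq hqq
          obtain ⟨y, rfl⟩ := QuotientGroup.mk'_surjective (pTors G p) qq
          have : ((y ^ p : G) : G ⧸ pTors G p) = 1 := by
            rw [← hqq]; rfl
          rw [QuotientGroup.eq_one_iff] at this
          obtain ⟨n, hn⟩ := this
          have : y ∈ pTors G p := ⟨n + 1, by rw [pow_succ', pow_mul, hn]⟩
          rw [QuotientGroup.mk'_apply, QuotientGroup.eq_one_iff]
          exact this
        haveI : IsReduced (MonoidAlgebra R (G ⧸ pTors G p)) := ma_isReduced p hp hQ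
        set π := MonoidAlgebra.mapDomainRingHom R (QuotientGroup.mk' (pTors G p)) with hπ
        have hπx : π x = 0 := by
          have : IsNilpotent (π x) := hx.map π
          exact IsReduced.eq_zero _ this
        apply ker_le_Phi
        rw [hπ] at hπx
        exact hπx
      · -- Phi ≤ nilradical
        rw [Phi, Ideal.span_le]
        rintro _ ⟨n, hn, rfl⟩
        obtain ⟨k, hk⟩ := hn
        simp only [SetLike.mem_coe, mem_nilradical]
        refine ⟨p ^ k, ?_⟩
        rw [sub_pow_char_pow, ← map_pow, hk, map_one, one_pow, sub_self]
end

section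
/- Let R be a commutative ring and G an abelian group, and let RG be the group ring. Suppose R is reduced and there exists a prime number p such that the characteristic of R is p and G contains an element of order p. Then the nilradical of RG equals Φ(G_p), where G_p is the p-primary component of G (the subgroup of elements of G whose order is a power of p). -/
section aux

variable {R G : Type*} [CommRing R] [CommGroup G]

instance monoidAlgebraCharP (p : ℕ) [CharP R p] : CharP (MonoidAlgebra R G) p :=
  charP_of_injective_ringHom
    (f := MonoidAlgebra.singleOneRingHom (R := R) (M := G))
    (fun a b h => Finsupp.single_injective 1 (congrArg MonoidAlgebra.coeff h)) p

/-- Key identity: the `p^m`-power map on a monoid algebra in characteristic `p`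
is given by raising group elements and coefficients to the `p^m`. -/
theorem pow_char_pow_eq (p : ℕ) [Fact p.Prime] [CharP R p] (m : ℕ)
    (x : MonoidAlgebra R G) :
    x ^ p ^ m = MonoidAlgebra.mapDomain (fun g : G => g ^ p ^ m)
      (MonoidAlgebra.ofCoeff (Finsupp.mapRange (fun r : R => r ^ p ^ m) (zero_pow (pow_ne_zero m
        (Nat.Prime.ne_zero Fact.out))) x.coeff)) := by
  induction x using MonoidAlgebra.induction_linear with
  | zero =>
    rw [MonoidAlgebra.coeff_zero, Finsupp.mapRange_zero, MonoidAlgebra.ofCoeff_zero,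
      MonoidAlgebra.mapDomain_zero, zero_pow (pow_ne_zero m (Nat.Prime.ne_zero Fact.out))]
  | add a b ha hb =>
    rw [MonoidAlgebra.coeff_add,
      Finsupp.mapRange_add (fun r s => add_pow_char_pow (x := r) (y := s) p m),
      MonoidAlgebra.ofCoeff_add, MonoidAlgebra.mapDomain_add, ← ha, ← hb, add_pow_char_pow]
  | single a b =>
    rw [MonoidAlgebra.single_pow, MonoidAlgebra.coeff_single, Finsupp.mapRange_single,
      ← MonoidAlgebra.coeff_single, MonoidAlgebra.ofCoeff_coeff, MonoidAlgebra.mapDomain_single]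

/-- If `R` is reduced of characteristic `p` and `G` has no element of order `p`,
then the group ring is reduced. -/
theorem monoidAlgebra_isReduced (p : ℕ) [Fact p.Prime] [CharP R p] [IsReduced R]
    (hG : ∀ g : G, g ^ p = 1 → g = 1) : IsReduced (MonoidAlgebra R G) := by
  have hinj : ∀ m : ℕ, Function.Injective fun g : G => g ^ p ^ m := by
    intro m
    induction m with
    | zero => intro a b h; simpa using h
    | succ n ih =>
      intro a b hab
      simp only [pow_succ, pow_mul] at hab
      have : (a ^ p ^ n * (b ^ p ^ n)⁻¹) ^ p = 1 := by
        rw [mul_pow, inv_pow, ← hab, mul_inv_cancel]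
      exact ih (by
        have := hG _ this
        rwa [mul_inv_eq_one] at this)
  constructor
  intro x hx
  obtain ⟨n, hn⟩ := hx
  have hxq : x ^ p ^ n = 0 := by
    rcases le_or_gt n (p ^ n) with h | h
    · calc x ^ p ^ n = x ^ n * x ^ (p ^ n - n) := by
            rw [← pow_add, Nat.add_sub_cancel' h]
        _ = 0 := by rw [hn, zero_mul]
    · exact absurd (Nat.lt_pow_self (n := n) (Fact.out : Nat.Prime p).one_lt) (Nat.lt_asymm h)
  rw [pow_char_pow_eq p n] at hxq
  have h2 : MonoidAlgebra.ofCoeff (Finsupp.mapRange (fun r : R => r ^ p ^ n) (zero_pow (pow_ne_zero n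
      (Nat.Prime.ne_zero Fact.out))) x.coeff) = 0 :=
    MonoidAlgebra.mapDomain_injective (hinj n) (by rw [hxq, MonoidAlgebra.mapDomain_zero])
  ext g
  have h3 : (x.coeff g) ^ p ^ n = 0 := by
    have := congrFun (congrArg (fun y => DFunLike.coe (MonoidAlgebra.coeff y)) h2) g
    simpa using this
  simpa using IsReduced.eq_zero _ ⟨p ^ n, h3⟩

theorem ker_le_Phi (N : Subgroup G) (x : MonoidAlgebra R G)
    (hx : MonoidAlgebra.mapDomain (QuotientGroup.mk (s := N)) x = 0) : x ∈ Phi R N := by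
  classical
  set mapD : MonoidAlgebra R G → MonoidAlgebra R G :=
    MonoidAlgebra.mapDomain (fun g : G => ((QuotientGroup.mk g : G ⧸ N)).out) with hmapD
  have key : ∀ y : MonoidAlgebra R G, y - mapD y ∈ Phi R N := by
    intro y
    induction y using MonoidAlgebra.induction_linear with
    | zero =>
      have h1 : mapD 0 = 0 := MonoidAlgebra.mapDomain_zero _
      rw [h1, sub_zero]
      exact zero_mem _
    | add a b ha hb =>
      have h1 : mapD (a + b) = mapD a + mapD b := MonoidAlgebra.mapDomain_add _ _ _
      rw [h1, ← sub_add_sub_comm]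
      exact Ideal.add_mem _ ha hb
    | single g r =>
      set g' : G := ((QuotientGroup.mk g : G ⧸ N)).out with hg'
      have h1 : mapD (MonoidAlgebra.single g r) = MonoidAlgebra.single g' r :=
        MonoidAlgebra.mapDomain_single
      rw [h1]
      have hmk : (QuotientGroup.mk g' : G ⧸ N) = QuotientGroup.mk g := by
        rw [hg']; exact QuotientGroup.out_eq' _
      have hmem : g'⁻¹ * g ∈ N := QuotientGroup.eq.mp hmk
      have heq : MonoidAlgebra.single g r - MonoidAlgebra.single g' r
          = MonoidAlgebra.single g' r * (MonoidAlgebra.of R G (g'⁻¹ * g) - 1) := by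
        rw [mul_sub, mul_one, MonoidAlgebra.of_apply, MonoidAlgebra.single_mul_single,
          mul_inv_cancel_left, mul_one]
      rw [heq]
      exact Ideal.mul_mem_left _ _ (Ideal.subset_span ⟨g'⁻¹ * g, hmem, rfl⟩)
  have h0 : mapD x = 0 := by
    have h1 : mapD x = MonoidAlgebra.mapDomain (fun q : G ⧸ N => q.out)
        (MonoidAlgebra.mapDomain (QuotientGroup.mk (s := N)) x) := by
      ext; simp [hmapD, MonoidAlgebra.coeff_mapDomain, ← Finsupp.mapDomain_comp]; rfl
    rw [h1, hx, MonoidAlgebra.mapDomain_zero]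
  have hkey := key x
  rw [h0, sub_zero] at hkey
  exact hkey

end aux

theorem stmt1 (R G : Type*) [CommRing R] [CommGroup G] [IsReduced R]
    (p : ℕ) [Fact p.Prime] [CharP R p] (g : G) (hg : orderOf g = p) :
    nilradical (MonoidAlgebra R G) = Phi R (CommGroup.primaryComponent G p) := by
  set N := CommGroup.primaryComponent G p with hN
  apply le_antisymm
  · -- nilradical ≤ Phi
    intro x hx
    have hx' : IsNilpotent x := hx
    -- quotient group has no p-torsion
    have hQ : ∀ q : G ⧸ N, q ^ p = 1 → q = 1 := by
      intro q hq
      obtain ⟨a, rfl⟩ := QuotientGroup.mk_surjective q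
      have : (QuotientGroup.mk (a ^ p) : G ⧸ N) = 1 := by
        rw [QuotientGroup.mk_pow]; exact hq
      rw [QuotientGroup.eq_one_iff] at this
      obtain ⟨k, hk⟩ : ∃ k, (a ^ p) ^ p ^ k = 1 := this
      have hord : a ^ p ^ (k + 1) = 1 := by
        rw [pow_succ', pow_mul, hk]
      have : a ∈ N := by
        exact ⟨k + 1, hord⟩
      rw [QuotientGroup.eq_one_iff]
      exact this
    have : IsReduced (MonoidAlgebra R (G ⧸ N)) := monoidAlgebra_isReduced p hQ
    have hmap : IsNilpotent
        ((MonoidAlgebra.mapDomainRingHom R (QuotientGroup.mk' N)) x) :=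
      IsNilpotent.map hx' _
    have h0 : MonoidAlgebra.mapDomain (QuotientGroup.mk (s := N)) x = 0 := by
      have := IsReduced.eq_zero _ hmap
      simpa [MonoidAlgebra.mapDomainRingHom_apply, QuotientGroup.coe_mk'] using this
    exact ker_le_Phi N x h0
  · -- Phi ≤ nilradical
    rw [Phi, Ideal.span_le]
    rintro _ ⟨n, hn, rfl⟩
    obtain ⟨k, hk⟩ : ∃ k, n ^ p ^ k = 1 := hn
    refine mem_nilradical.mpr ⟨p ^ k, ?_⟩
    rw [sub_pow_char_pow, one_pow, ← map_pow, hk, map_one, sub_self]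
end

section
/- Let R be a commutative ring and G a torsion abelian group, and let RG be the group ring. Suppose the Jacobson radical of R is zero and there exists a prime number p such that the characteristic of R is p and G contains an element of order p. Then the Jacobson radical of RG equals Φ(G_p), where G_p is the p-primary component of G. -/
open MonoidAlgebra

open MonoidAlgebra

section Helpers
variable {A B : Type*} [CommRing A] [CommRing B]

lemma jac_map (f : A →+* B) (hf : Function.Surjective f) {x : A}
    (hx : x ∈ (⊥ : Ideal A).jacobson) : f x ∈ (⊥ : Ideal B).jacobson := by
  rw [Ideal.mem_jacobson_bot] at hx ⊢
  intro y
  obtain ⟨z, rfl⟩ := hf y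
  simpa using (hx z).map f

lemma jac_bot_of_semisimple [IsSemisimpleRing A] :
    (⊥ : Ideal A).jacobson = ⊥ := by
  obtain ⟨e, he, hspan⟩ := IsSemisimpleRing.ideal_eq_span_idempotent (⊥ : Ideal A).jacobson
  have he' : e ∈ (⊥ : Ideal A).jacobson := hspan ▸ Ideal.subset_span rfl
  obtain ⟨u, hu⟩ := Ideal.mem_jacobson_bot.mp he' (-1)
  have h0 : e = 0 := by
    have h1 : e * (e * (-1) + 1) = 0 := by
      have h2 := he.eq
      ring_nf
      rw [sq, h2, sub_self]
    calc e = e * (↑u * ↑u⁻¹) := by simp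
      _ = e * (e * (-1) + 1) * ↑u⁻¹ := by rw [← hu]; ring
      _ = 0 := by rw [h1, zero_mul]
  rw [hspan, h0]
  simp

/-- mapRange as a ring hom on monoid algebras -/
noncomputable def mapRangeRH {G : Type*} [CommGroup G] (f : A →+* B) :
    MonoidAlgebra A G →+* MonoidAlgebra B G :=
  MonoidAlgebra.liftNCRingHom (MonoidAlgebra.singleOneRingHom.comp f) (MonoidAlgebra.of B G)
    fun _ _ => Commute.all _ _

lemma mapRangeRH_single {G : Type*} [CommGroup G] (f : A →+* B) (g : G) (a : A) :
    mapRangeRH f (MonoidAlgebra.single g a) = MonoidAlgebra.single g (f a) := by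
  show MonoidAlgebra.liftNC _ _ _ = _
  rw [MonoidAlgebra.liftNC_single]
  show MonoidAlgebra.single 1 (f a) * MonoidAlgebra.single g 1 = _
  rw [MonoidAlgebra.single_mul_single, one_mul, mul_one]

lemma mapRangeRH_apply {G : Type*} [CommGroup G] (f : A →+* B) (x : MonoidAlgebra A G) (g : G) :
    (mapRangeRH f x).coeff g = f (x.coeff g) := by
  induction x using MonoidAlgebra.induction_linear with
  | zero => simp
  | add a b ha hb => rw [map_add, MonoidAlgebra.coeff_add, MonoidAlgebra.coeff_add, Finsupp.add_apply, Finsupp.add_apply, ha, hb, map_add]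
  | single a b =>
      rw [mapRangeRH_single]
      rcases eq_or_ne a g with rfl | h
      · simp [MonoidAlgebra.coeff_single, Finsupp.single_apply]
      · simp [MonoidAlgebra.coeff_single, Finsupp.single_apply, h]

lemma mapRangeRH_surjective {G : Type*} [CommGroup G] (f : A →+* B)
    (hf : Function.Surjective f) : Function.Surjective (mapRangeRH (G := G) f) := by
  intro y
  induction y using MonoidAlgebra.induction_linear with
  | zero => exact ⟨0, map_zero _⟩
  | add a b ha hb =>
      obtain ⟨xa, rfl⟩ := ha; obtain ⟨xb, rfl⟩ := hb
      exact ⟨xa + xb, map_add _ _ _⟩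
  | single a b =>
      obtain ⟨c, rfl⟩ := hf b
      exact ⟨MonoidAlgebra.single a c, mapRangeRH_single f a c⟩

end Helpers
open MonoidAlgebra

section FieldCase
universe u v

lemma jac_bot_field {k : Type u} [CommRing k] (hk : IsField k) {H : Type v} [CommGroup H]
    [Finite H] (hcard : (Nat.card H : k) ≠ 0) :
    (⊥ : Ideal (MonoidAlgebra k H)).jacobson = ⊥ := by
  letI : Field k := hk.toField
  cases nonempty_fintype H
  let K := ULift.{v} k
  let H' := ULift.{u} H
  have hcard' : (Fintype.card H' : K) ≠ 0 := by
    intro hc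
    apply hcard
    have := congrArg (ULift.ringEquiv : K ≃+* k) hc
    rw [map_natCast, map_zero] at this
    rwa [Nat.card_eq_fintype_card, ← Fintype.card_ulift H]
  haveI : NeZero (Nat.card H' : K) := ⟨by rwa [Nat.card_eq_fintype_card]⟩
  haveI : IsSemisimpleRing (MonoidAlgebra K H') := inferInstance
  -- the transport hom
  let e1 := (MonoidAlgebra.domCongr k k ((MulEquiv.ulift (α := H)).symm)).toRingEquiv
  let f2 : MonoidAlgebra k H' →+* MonoidAlgebra K H' :=
    mapRangeRH ((ULift.ringEquiv (R := k)).symm : k →+* K)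
  let f : MonoidAlgebra k H →+* MonoidAlgebra K H' := f2.comp e1.toRingHom
  have hf2inj : Function.Injective f2 := by
    intro a b hab
    ext g
    have := congrArg (fun z => (ULift.ringEquiv : K ≃+* k) ((z : MonoidAlgebra K H').coeff g)) hab
    simpa [f2, mapRangeRH_apply] using this
  have hfsurj : Function.Surjective f :=
    (mapRangeRH_surjective _ (RingEquiv.surjective _)).comp e1.surjective
  have hfinj : Function.Injective f := hf2inj.comp e1.injective
  rw [eq_bot_iff]
  intro x hx
  have h1 : f x ∈ (⊥ : Ideal (MonoidAlgebra K H')).jacobson := jac_map f hfsurj hx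
  rw [jac_bot_of_semisimple, Ideal.mem_bot] at h1
  rw [Ideal.mem_bot]
  exact hfinj (by rw [h1, map_zero])

lemma jac_bot_field' {k : Type u} [CommRing k] (hk : IsField k) {H : Type v} [CommGroup H]
    [Finite H] (hcard : (Nat.card H : k) ≠ 0) {x : MonoidAlgebra k H}
    (hx : x ∈ (⊥ : Ideal (MonoidAlgebra k H)).jacobson) : x = 0 := by
  rw [jac_bot_field hk hcard, Ideal.mem_bot] at hx
  exact hx

end FieldCase
section FiniteCase

lemma jac_bot_finite {R : Type*} [CommRing R] (hJ : (⊥ : Ideal R).jacobson = ⊥)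
    (p : ℕ) [Fact p.Prime] [CharP R p]
    {H : Type*} [CommGroup H] [Finite H] (hcard : ¬ p ∣ Nat.card H) :
    (⊥ : Ideal (MonoidAlgebra R H)).jacobson = ⊥ := by
  rw [eq_bot_iff]
  intro y hy
  rw [Ideal.mem_bot]
  have key : ∀ h : H, y.coeff h = 0 := by
    intro h
    have hmem : y.coeff h ∈ (⊥ : Ideal R).jacobson := by
      rw [Ideal.jacobson]
      rw [Ideal.mem_sInf]
      rintro m ⟨-, hmax⟩
      haveI : m.IsMaximal := hmax
      let k := R ⧸ m
      have hpk : (p : k) = 0 := by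
        have : ((p : R) : k) = 0 := by rw [CharP.cast_eq_zero R p]; exact map_zero _
        rwa [map_natCast] at this
      have hck : (Nat.card H : k) ≠ 0 := by
        intro hc
        have h1 : ringChar k ∣ p := ringChar.dvd hpk
        have h2 : ringChar k ∣ Nat.card H := ringChar.dvd hc
        rcases (Nat.Prime.eq_one_or_self_of_dvd (Fact.out : p.Prime) _ h1) with h3 | h3
        · exact absurd h3 (CharP.ringChar_ne_one)
        · rw [h3] at h2; exact hcard h2
      have hsurj : Function.Surjective (mapRangeRH (G := H) (Ideal.Quotient.mk m)) :=
        mapRangeRH_surjective _ Ideal.Quotient.mk_surjective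
      have h0 : mapRangeRH (G := H) (Ideal.Quotient.mk m) y = 0 :=
        jac_bot_field' ((Ideal.Quotient.maximal_ideal_iff_isField_quotient m).mp hmax) hck (jac_map _ hsurj hy)
      have := congrArg (fun z : MonoidAlgebra k H => z.coeff h) h0
      simp only [mapRangeRH_apply, MonoidAlgebra.coeff_zero, Finsupp.coe_zero, Pi.zero_apply] at this
      exact Ideal.Quotient.eq_zero_iff_mem.mp this
    rwa [hJ, Ideal.mem_bot] at hmem
  exact MonoidAlgebra.ext (Finsupp.ext key)

end FiniteCase
open MonoidAlgebra

section Proj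
open scoped Classical
variable {A : Type*} [CommRing A] {Q : Type*} [CommGroup Q] (H : Subgroup Q)

/-- restriction of a monoid-algebra element to a subgroup -/
noncomputable def projH (w : MonoidAlgebra A Q) : MonoidAlgebra A ↥H :=
  MonoidAlgebra.ofCoeff (Finsupp.subtypeDomain (· ∈ H) w.coeff)

lemma projH_add (w w' : MonoidAlgebra A Q) : projH H (w + w') = projH H w + projH H w' :=
  congrArg MonoidAlgebra.ofCoeff Finsupp.subtypeDomain_add

lemma projH_single (q : Q) (a : A) :
    projH H (MonoidAlgebra.single q a)
      = if hq : q ∈ H then MonoidAlgebra.single (⟨q, hq⟩ : ↥H) a else 0 := by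
  ext b
  rw [show (projH H (MonoidAlgebra.single q a)).coeff b = (MonoidAlgebra.single q a).coeff ↑b from
    Finsupp.subtypeDomain_apply]
  split_ifs with hq
  · simp [MonoidAlgebra.coeff_single, Finsupp.single_apply, Subtype.ext_iff]
  · rw [MonoidAlgebra.coeff_single, Finsupp.single_apply, if_neg (by rintro rfl; exact hq b.2)]
    rfl

lemma projH_one : projH H (1 : MonoidAlgebra A Q) = 1 := by
  show projH H (MonoidAlgebra.single 1 1) = _
  rw [projH_single, dif_pos H.one_mem]
  rfl

noncomputable abbrev iotaH : MonoidAlgebra A ↥H →+* MonoidAlgebra A Q :=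
  MonoidAlgebra.mapDomainRingHom A H.subtype

lemma projH_mul (a : MonoidAlgebra A ↥H) (w : MonoidAlgebra A Q) :
    projH H (iotaH H a * w) = a * projH H w := by
  classical
  induction a using MonoidAlgebra.induction_linear with
  | zero => simp only [map_zero, zero_mul]; exact congrArg MonoidAlgebra.ofCoeff Finsupp.subtypeDomain_zero
  | add u v hu hv => rw [map_add, add_mul, projH_add, hu, hv, add_mul]
  | single h r =>
    induction w using MonoidAlgebra.induction_linear with
    | zero => rw [mul_zero]; show projH H 0 = _; rw [show (projH H 0 : MonoidAlgebra A ↥H) = 0 from congrArg MonoidAlgebra.ofCoeff Finsupp.subtypeDomain_zero, mul_zero]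
    | add u v hu hv => rw [mul_add, projH_add, hu, hv, projH_add, mul_add]
    | single q s =>
      have : iotaH H (MonoidAlgebra.single h r) = MonoidAlgebra.single (↑h : Q) r :=
        MonoidAlgebra.mapDomain_single
      rw [this, MonoidAlgebra.single_mul_single, projH_single, projH_single]
      by_cases hq : q ∈ H
      · rw [dif_pos hq, dif_pos ((H.mul_mem_cancel_left h.2).mpr hq),
          MonoidAlgebra.single_mul_single]
        rfl
      · rw [dif_neg hq, dif_neg (fun hc => hq ((H.mul_mem_cancel_left h.2).mp hc)), mul_zero]

lemma iotaH_projH (x : MonoidAlgebra A Q) (hx : ∀ q ∈ x.coeff.support, q ∈ H) :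
    iotaH H (projH H x) = x := by
  ext q
  by_cases hq : q ∈ H
  · have : q = H.subtype ⟨q, hq⟩ := rfl
    show Finsupp.mapDomain H.subtype (projH H x).coeff q = x.coeff q
    rw [this, Finsupp.mapDomain_apply (f := ⇑H.subtype) Subtype.val_injective]
    rfl
  · show Finsupp.mapDomain H.subtype (projH H x).coeff q = x.coeff q
    rw [Finsupp.mapDomain_notin_range _ _ (by rintro ⟨⟨a, ha⟩, rfl⟩; exact hq ha),
      eq_comm, ← Finsupp.notMem_support_iff]
    exact fun hc => hq (hx q hc)

lemma iotaH_surj_support (x : MonoidAlgebra A Q) (hx : ∀ q ∈ x.coeff.support, q ∈ H) :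
    ∃ y : MonoidAlgebra A ↥H, iotaH H y = x := ⟨projH H x, iotaH_projH H x hx⟩

end Proj
section TorsionCase

lemma jac_bot_torsion {R : Type*} [CommRing R] (hJ : (⊥ : Ideal R).jacobson = ⊥)
    (p : ℕ) [Fact p.Prime] [CharP R p]
    {Q : Type*} [CommGroup Q] (hQ : Monoid.IsTorsion Q)
    (hp : ∀ q : Q, orderOf q = p → q = 1) :
    (⊥ : Ideal (MonoidAlgebra R Q)).jacobson = ⊥ := by
  rw [eq_bot_iff]
  intro x hx
  rw [Ideal.mem_bot]
  set H : Subgroup Q := Subgroup.closure (x.coeff.support : Set Q) with hH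
  haveI : Group.FG ↥H := Group.closure_finset_fg x.coeff.support
  haveI : Finite ↥H := CommGroup.finite_of_fg_torsion ↥H (IsTorsion.subgroup hQ H)
  have hcard : ¬ p ∣ Nat.card ↥H := by
    intro hd
    cases nonempty_fintype ↥H
    rw [Nat.card_eq_fintype_card] at hd
    obtain ⟨h, hh⟩ := exists_prime_orderOf_dvd_card p hd
    have h1 : orderOf (H.subtype h) = p := by
      rw [orderOf_injective H.subtype Subtype.val_injective h, hh]
    have h2 : H.subtype h = 1 := hp _ h1
    rw [h2, orderOf_one] at h1
    exact (Fact.out : p.Prime).one_lt.ne' h1.symm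
  obtain ⟨y, hy⟩ := iotaH_surj_support H x fun q hq => Subgroup.subset_closure hq
  have hyJ : y ∈ (⊥ : Ideal (MonoidAlgebra R ↥H)).jacobson := by
    rw [Ideal.mem_jacobson_bot]
    intro z
    obtain ⟨u, hu⟩ := Ideal.mem_jacobson_bot.mp hx (iotaH H z)
    refine IsUnit.of_mul_eq_one (projH H ((u⁻¹ : (MonoidAlgebra R Q)ˣ) : MonoidAlgebra R Q)) ?_
    have hiu : iotaH H (y * z + 1) = (u : MonoidAlgebra R Q) := by
      rw [map_add, map_mul, map_one, hy, hu]
    calc (y * z + 1) * projH H ((u⁻¹ : (MonoidAlgebra R Q)ˣ) : MonoidAlgebra R Q)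
        = projH H (iotaH H (y * z + 1) * ((u⁻¹ : (MonoidAlgebra R Q)ˣ) : MonoidAlgebra R Q)) :=
          (projH_mul H _ _).symm
      _ = projH H ((u : MonoidAlgebra R Q) * ((u⁻¹ : (MonoidAlgebra R Q)ˣ) : MonoidAlgebra R Q)) := by rw [hiu]
      _ = projH H 1 := by rw [Units.mul_inv]
      _ = 1 := projH_one H
  rw [jac_bot_finite hJ p hcard, Ideal.mem_bot] at hyJ
  rw [← hy, hyJ, map_zero]

end TorsionCase
lemma mapDomainRH_surjective {A : Type*} [CommRing A] {G H : Type*} [CommGroup G] [CommGroup H]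
    (f : G →* H) (hf : Function.Surjective f) :
    Function.Surjective (MonoidAlgebra.mapDomainRingHom A f) := by
  intro y
  induction y using MonoidAlgebra.induction_linear with
  | zero => exact ⟨0, map_zero _⟩
  | add a b ha hb =>
      obtain ⟨xa, rfl⟩ := ha; obtain ⟨xb, rfl⟩ := hb
      exact ⟨xa + xb, map_add _ _ _⟩
  | single a b =>
      obtain ⟨g, rfl⟩ := hf a
      exact ⟨MonoidAlgebra.single g b, MonoidAlgebra.mapDomain_single⟩

theorem stmt3 (R G : Type*) [CommRing R] [CommGroup G] (hG : Monoid.IsTorsion G)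
    (hJ : (⊥ : Ideal R).jacobson = ⊥)
    (p : ℕ) [Fact p.Prime] [CharP R p] (g : G) (hg : orderOf g = p) :
    (⊥ : Ideal (MonoidAlgebra R G)).jacobson = Phi R (CommGroup.primaryComponent G p) := by
  set N := CommGroup.primaryComponent G p with hN
  have hmemN : ∀ a : G, a ∈ N ↔ ∃ k, orderOf a = p ^ k := fun a => by
    show (∃ k : ℕ, a ^ p ^ k = 1) ↔ _
    exact ⟨fun ⟨k, hk⟩ => by
      obtain ⟨j, -, hj⟩ := (Nat.dvd_prime_pow (Fact.out : p.Prime)).mp (orderOf_dvd_of_pow_eq_one hk)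
      exact ⟨j, hj⟩, fun ⟨k, hk⟩ => ⟨k, by rw [← hk]; exact pow_orderOf_eq_one a⟩⟩
  apply le_antisymm
  · -- jacobson ⊥ ≤ Phi
    intro x hx
    set mk : G →* G ⧸ N := QuotientGroup.mk' N with hmk
    set π : MonoidAlgebra R G →+* MonoidAlgebra R (G ⧸ N) :=
      MonoidAlgebra.mapDomainRingHom R mk with hπ
    have hπs : Function.Surjective π := mapDomainRH_surjective mk (QuotientGroup.mk'_surjective N)
    have hQtor : Monoid.IsTorsion (G ⧸ N) :=
      IsTorsion.of_surjective (QuotientGroup.mk'_surjective N) hG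
    have hp1 : ∀ q : G ⧸ N, orderOf q = p → q = 1 := by
      intro q hq
      obtain ⟨a, rfl⟩ := QuotientGroup.mk'_surjective N q
      have hap : a ^ p ∈ N := by
        have h1 : (QuotientGroup.mk' N) (a ^ p) = 1 := by
          rw [map_pow, ← hq]; exact pow_orderOf_eq_one _
        exact (QuotientGroup.eq_one_iff _).mp h1
      obtain ⟨k, hk⟩ := (hmemN _).mp hap
      have hone : a ^ p ^ (k + 1) = 1 := by
        rw [pow_succ', pow_mul, ← hk]
        exact pow_orderOf_eq_one _
      have hdvd : orderOf a ∣ p ^ (k + 1) := orderOf_dvd_of_pow_eq_one hone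
      obtain ⟨j, -, hj⟩ := (Nat.dvd_prime_pow (Fact.out : p.Prime)).mp hdvd
      have haN : a ∈ N := (hmemN a).mpr ⟨j, hj⟩
      exact (QuotientGroup.eq_one_iff a).mpr haN
    have h0 : π x = 0 := by
      have := jac_map π hπs hx
      rwa [jac_bot_torsion hJ p hQtor hp1, Ideal.mem_bot] at this
    -- now show x ∈ Phi
    set s : G ⧸ N → G := fun q => Quotient.out q with hs
    have hsec : ∀ q : G ⧸ N, mk (s q) = q := fun q => QuotientGroup.out_eq' q
    have e1 : ∑ a ∈ x.coeff.support, MonoidAlgebra.single a (x.coeff a) = x := MonoidAlgebra.sum_coeff_single x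
    have e2 : (∑ a ∈ x.coeff.support, MonoidAlgebra.single (s (mk a)) (x.coeff a) : MonoidAlgebra R G)
        = MonoidAlgebra.mapDomain s (π x) := by
      rw [hπ]
      show _ = MonoidAlgebra.ofCoeff (Finsupp.mapDomain s (Finsupp.mapDomain mk x.coeff))
      rw [← Finsupp.mapDomain_comp]
      simp_rw [← MonoidAlgebra.ofCoeff_single]
      rw [← MonoidAlgebra.ofCoeff_sum]
      rfl
    have key : x = ∑ a ∈ x.coeff.support,
        (MonoidAlgebra.single a (x.coeff a) - MonoidAlgebra.single (s (mk a)) (x.coeff a) : MonoidAlgebra R G) := by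
      rw [Finset.sum_sub_distrib, e1, e2, h0, MonoidAlgebra.mapDomain_zero, sub_zero]
    rw [key]
    apply Ideal.sum_mem
    intro a ha
    have hgN : (s (mk a))⁻¹ * a ∈ N := by
      rw [← QuotientGroup.eq_one_iff]
      show mk ((s (mk a))⁻¹ * a) = 1
      rw [map_mul, map_inv, hsec, inv_mul_cancel]
    have h2 : MonoidAlgebra.single (s (mk a)) (x.coeff a) * (MonoidAlgebra.of R G ((s (mk a))⁻¹ * a) - 1)
        ∈ Phi R N :=
      Ideal.mul_mem_left _ _ (Ideal.subset_span ⟨(s (mk a))⁻¹ * a, hgN, rfl⟩)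
    convert h2 using 1
    rw [mul_sub, mul_one, MonoidAlgebra.of_apply, MonoidAlgebra.single_mul_single,
      mul_inv_cancel_left, mul_one]
  · -- Phi ≤ jacobson ⊥
    rw [Phi, Ideal.span_le]
    rintro - ⟨n, hn, rfl⟩
    obtain ⟨k, hk⟩ := (hmemN n).mp hn
    haveI : CharP (MonoidAlgebra R G) p := by
      refine charP_of_injective_ringHom (f := MonoidAlgebra.singleOneRingHom) ?_ p
      intro a b hab
      exact Finsupp.single_injective (1 : G) (congrArg MonoidAlgebra.coeff hab)
    have hnil : (MonoidAlgebra.of R G n - 1) ^ p ^ k = 0 := by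
      rw [sub_pow_char_pow, one_pow, ← map_pow, ← hk, pow_orderOf_eq_one, map_one, sub_self]
    have : MonoidAlgebra.of R G n - 1 ∈ (⊥ : Ideal (MonoidAlgebra R G)).radical :=
      Ideal.mem_radical_iff.mpr ⟨p ^ k, by rw [hnil]; exact Ideal.zero_mem _⟩
    exact Ideal.radical_le_jacobson this
end

section
/- Let R be a commutative ring and G an abelian group (not necessarily torsion), and let RG be the group ring. If the Jacobson radical of R is zero and there exists a prime number p such that the characteristic of R is p and G contains an element of order p, then the Jacobson radical of RG equals Φ(N) for some nontrivial subgroup N of G. -/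
open Finsupp

namespace StmtAux

/-- Coefficient-wise ring hom on monoid algebras. -/
noncomputable def mapRangeRingHom' {R S : Type*} [CommRing R] [CommRing S] {H : Type*} [Monoid H]
    (f : R →+* S) : MonoidAlgebra R H →+* MonoidAlgebra S H :=
  MonoidAlgebra.liftNCRingHom (MonoidAlgebra.singleOneRingHom.comp f) (MonoidAlgebra.of S H)
    (fun x y => by
      show MonoidAlgebra.single (1 : H) (f x) * MonoidAlgebra.single y (1 : S) =
        MonoidAlgebra.single y (1 : S) * MonoidAlgebra.single (1 : H) (f x)
      simp [MonoidAlgebra.single_mul_single])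

lemma mapRangeRingHom'_single {R S : Type*} [CommRing R] [CommRing S] {H : Type*} [Monoid H]
    (f : R →+* S) (a : H) (b : R) :
    mapRangeRingHom' f (MonoidAlgebra.single a b) = MonoidAlgebra.single a (f b) := by
  have h0 : mapRangeRingHom' f (MonoidAlgebra.single a b) =
      MonoidAlgebra.liftNC ((MonoidAlgebra.singleOneRingHom.comp f : R →+* MonoidAlgebra S H) :
        R →+ MonoidAlgebra S H) (⇑(MonoidAlgebra.of S H)) (MonoidAlgebra.single a b) := rfl
  rw [h0, MonoidAlgebra.liftNC_single]
  show MonoidAlgebra.single (1 : H) (f b) * MonoidAlgebra.single a (1 : S) = _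
  simp [MonoidAlgebra.single_mul_single]

lemma mapRangeRingHom'_apply {R S : Type*} [CommRing R] [CommRing S] {H : Type*} [Monoid H]
    (f : R →+* S) (x : MonoidAlgebra R H) (h : H) :
    (mapRangeRingHom' f x).coeff h = f (x.coeff h) := by
  induction x using MonoidAlgebra.induction_linear with
  | zero => simp
  | add a b ha hb => rw [map_add, MonoidAlgebra.coeff_add, Finsupp.add_apply, ha, hb, MonoidAlgebra.coeff_add, Finsupp.add_apply, map_add]
  | single a b =>
      classical
      rw [mapRangeRingHom'_single]
      rw [MonoidAlgebra.coeff_single, MonoidAlgebra.coeff_single, Finsupp.single_apply, Finsupp.single_apply]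
      split <;> simp

lemma mapRangeRingHom'_surjective {R S : Type*} [CommRing R] [CommRing S] {H : Type*} [Monoid H]
    (f : R →+* S) (hf : Function.Surjective f) :
    Function.Surjective (mapRangeRingHom' (H := H) f) := by
  intro y
  induction y using MonoidAlgebra.induction_linear with
  | zero => exact ⟨0, map_zero _⟩
  | add a b ha hb =>
      obtain ⟨xa, rfl⟩ := ha; obtain ⟨xb, rfl⟩ := hb
      exact ⟨xa + xb, map_add _ _ _⟩
  | single a b =>
      obtain ⟨r, rfl⟩ := hf b
      exact ⟨MonoidAlgebra.single a r, mapRangeRingHom'_single f a r⟩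

lemma jacobson_bot_map {A B : Type*} [CommRing A] [CommRing B] (f : A →+* B)
    (hf : Function.Surjective f) {x : A} (hx : x ∈ (⊥ : Ideal A).jacobson) :
    f x ∈ (⊥ : Ideal B).jacobson := by
  rw [Ideal.mem_jacobson_bot] at hx ⊢
  intro y
  obtain ⟨a, rfl⟩ := hf y
  have := (hx a).map f
  simpa using this

end StmtAux
open Finsupp
namespace StmtAux

lemma charP_MA (R : Type*) {H : Type*} [CommRing R] [Monoid H] (p : ℕ) [CharP R p] :
    CharP (MonoidAlgebra R H) p :=
  charP_of_injective_ringHom (R := R)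
    (f := MonoidAlgebra.singleOneRingHom)
    (MonoidAlgebra.single_right_injective) p

lemma pow_char_eq_zero {K : Type*} {H : Type*} [CommRing K] [IsReduced K] [CommGroup H] {p : ℕ}
    [Fact p.Prime] [CharP K p] (hH : ∀ h : H, h ^ p = 1 → h = 1)
    (x : MonoidAlgebra K H) (hx : x ^ p = 0) : x = 0 := by
  classical
  haveI := charP_MA K (H := H) p
  by_contra hne
  obtain ⟨g0, hg0⟩ := Finsupp.support_nonempty_iff.mpr (mt MonoidAlgebra.coeff_eq_zero.mp hne)
  have hinj : Function.Injective fun h : H => h ^ p := by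
    intro a b hab
    simp only at hab
    have h1 : (a * b⁻¹) ^ p = 1 := by
      rw [mul_pow, hab, inv_pow, mul_inv_cancel]
    have := hH _ h1
    rwa [mul_inv_eq_one] at this
  have hx2 : x ^ p = ∑ g ∈ x.coeff.support, MonoidAlgebra.single (g ^ p) (x.coeff g ^ p) := by
    calc x ^ p = frobenius (MonoidAlgebra K H) p x := rfl
      _ = frobenius (MonoidAlgebra K H) p (∑ g ∈ x.coeff.support, MonoidAlgebra.single g (x.coeff g)) :=
          congrArg _ (by conv_lhs => rw [← MonoidAlgebra.sum_coeff_single x, Finsupp.sum])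
      _ = ∑ g ∈ x.coeff.support, frobenius (MonoidAlgebra K H) p (MonoidAlgebra.single g (x.coeff g)) :=
          map_sum _ _ _
      _ = ∑ g ∈ x.coeff.support, MonoidAlgebra.single (g ^ p) (x.coeff g ^ p) := by
          refine Finset.sum_congr rfl fun g _ => ?_
          rw [frobenius_def, MonoidAlgebra.single_pow]
  have hc : (x ^ p).coeff (g0 ^ p) = x.coeff g0 ^ p := by
    rw [hx2, MonoidAlgebra.coeff_sum, Finsupp.finset_sum_apply]
    rw [Finset.sum_eq_single g0]
    · rw [MonoidAlgebra.coeff_single, Finsupp.single_apply, if_pos rfl]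
    · intro g hg hne'
      rw [MonoidAlgebra.coeff_single, Finsupp.single_apply, if_neg]
      intro h
      exact hne' (hinj h)
    · intro h; exact absurd hg0 h
  rw [hx, MonoidAlgebra.coeff_zero, Finsupp.zero_apply] at hc
  exact (Finsupp.mem_support_iff.mp hg0) (IsNilpotent.eq_zero ⟨p, hc.symm⟩)

lemma isReduced_MA {K : Type*} {H : Type*} [CommRing K] [IsReduced K] [CommGroup H] {p : ℕ}
    [Fact p.Prime] [CharP K p] (hH : ∀ h : H, h ^ p = 1 → h = 1) :
    IsReduced (MonoidAlgebra K H) := by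
  constructor
  rintro x ⟨n, hn⟩
  have key : ∀ k, ∀ y : MonoidAlgebra K H, y ^ p ^ k = 0 → y = 0 := by
    intro k
    induction k with
    | zero => intro y hy; simpa using hy
    | succ k ih =>
        intro y hy
        refine pow_char_eq_zero hH y (ih _ ?_)
        have h2 : y ^ (p * p ^ k) = 0 := by rw [mul_comm, ← pow_succ]; exact hy
        rw [pow_mul] at h2
        exact h2
  rcases Nat.eq_zero_or_pos n with rfl | hn0
  · haveI : Subsingleton (MonoidAlgebra K H) := subsingleton_of_zero_eq_one (by simpa using hn.symm)
    exact Subsingleton.elim x 0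
  · refine key n x ?_
    exact pow_eq_zero_of_le (Nat.le_of_lt (Nat.lt_pow_self (n := n) (Fact.out : p.Prime).one_lt)) hn

end StmtAux
open Finsupp
namespace StmtAux2

lemma jacobson_bot_MA_field {K H : Type*} [CommRing K] [IsReduced K] [IsJacobsonRing K]
    [CommGroup H] {p : ℕ} [Fact p.Prime] [CharP K p] (hH : ∀ h : H, h ^ p = 1 → h = 1) :
    (⊥ : Ideal (MonoidAlgebra K H)).jacobson = ⊥ := by
  classical
  refine le_antisymm ?_ bot_le
  intro β hβ
  rw [Ideal.mem_bot]
  set H0 : Subgroup H := Subgroup.closure (β.coeff.support : Set H) with hH0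
  have hsupp : ∀ h ∈ β.coeff.support, h ∈ H0 := fun h hh => Subgroup.subset_closure hh
  let ι : MonoidAlgebra K H0 →+* MonoidAlgebra K H :=
    MonoidAlgebra.mapDomainRingHom K H0.subtype
  let π : MonoidAlgebra K H → MonoidAlgebra K H0 :=
    fun x => MonoidAlgebra.ofCoeff (Finsupp.subtypeDomain (· ∈ H0) x.coeff)
  have hπadd : ∀ x y, π (x + y) = π x + π y := fun x y => congrArg MonoidAlgebra.ofCoeff Finsupp.subtypeDomain_add
  have hπ1 : π 1 = 1 := by
    ext y
    rcases y with ⟨y, hy⟩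
    show (MonoidAlgebra.single (1 : H) (1 : K)).coeff y = _
    show _ = (MonoidAlgebra.single (1 : H0) (1 : K)).coeff ⟨y, hy⟩
    rw [MonoidAlgebra.coeff_single, MonoidAlgebra.coeff_single, Finsupp.single_apply, Finsupp.single_apply]
    simp [Subtype.ext_iff]
  have hι_single : ∀ (a : H0) (b : K),
      ι (MonoidAlgebra.single a b) = MonoidAlgebra.single (a : H) b := by
    intro a b
    exact MonoidAlgebra.mapDomain_single
  have hπι : ∀ (x : MonoidAlgebra K H) (c : MonoidAlgebra K H0), π (x * ι c) = π x * c := by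
    intro x c
    induction c using MonoidAlgebra.induction_linear with
    | zero => simp only [map_zero, mul_zero]; exact congrArg MonoidAlgebra.ofCoeff Finsupp.subtypeDomain_zero
    | add a b ha hb => rw [map_add, mul_add, hπadd, ha, hb, mul_add]
    | single a b =>
        rw [hι_single]
        ext y
        rcases y with ⟨y, hy⟩
        show (x * MonoidAlgebra.single (a : H) b).coeff y = _
        rw [MonoidAlgebra.coeff_mul_single_apply]
        show _ = (π x * MonoidAlgebra.single a b).coeff ⟨y, hy⟩
        rw [MonoidAlgebra.coeff_mul_single_apply]
        show _ = x.coeff ((⟨y, hy⟩ * a⁻¹ : H0) : H) * b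
        norm_num
  have hπβ : ι (π β) = β := by
    ext h
    by_cases hh : h ∈ H0
    · have : h = ((⟨h, hh⟩ : H0) : H) := rfl
      rw [this]
      exact Finsupp.mapDomain_apply (f := ⇑H0.subtype) Subtype.val_injective (π β).coeff ⟨h, hh⟩
    · show Finsupp.mapDomain (H0.subtype) (π β).coeff h = _
      rw [Finsupp.mapDomain_notin_range, eq_comm]
      · rw [← Finsupp.notMem_support_iff]
        exact fun hmem => hh (hsupp h hmem)
      · intro hr
        obtain ⟨a, rfl⟩ := hr
        exact hh a.2
  set a : MonoidAlgebra K H0 := π β with ha_def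
  have ha : a ∈ (⊥ : Ideal (MonoidAlgebra K H0)).jacobson := by
    rw [Ideal.mem_jacobson_bot]
    intro c
    obtain ⟨u, hu⟩ := Ideal.mem_jacobson_bot.mp hβ (ι c)
    have hι_ac : ι (a * c + 1) = β * ι c + 1 := by
      rw [map_add, map_mul, map_one, hπβ]
    have h1 : π (↑u⁻¹ * (β * ι c + 1)) = π ↑u⁻¹ * (a * c + 1) := by
      rw [← hι_ac, hπι]
    have h2 : (↑u⁻¹ : MonoidAlgebra K H) * (β * ι c + 1) = 1 := by
      rw [← hu]; exact u.inv_mul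
    rw [h2, hπ1] at h1
    exact IsUnit.of_mul_eq_one _ (by rw [mul_comm]; exact h1.symm)
  haveI : Group.FG H0 := by
    rw [hH0]
    infer_instance
  haveI : Monoid.FG H0 := Group.fg_iff_monoid_fg.mp inferInstance
  haveI : IsJacobsonRing (MonoidAlgebra K H0) := isJacobsonRing_of_finiteType (A := K)
  haveI : IsReduced (MonoidAlgebra K H0) := by
    refine StmtAux.isReduced_MA (p := p) ?_
    intro h hh
    have : ((h : H)) ^ p = 1 := by
      rw [← Subgroup.coe_pow, hh, Subgroup.coe_one]
    exact Subtype.ext (hH _ this)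
  have hbotrad : ((⊥ : Ideal (MonoidAlgebra K H0))).jacobson = ⊥ := by
    refine IsJacobsonRing.out' _ (Ideal.radical_eq_iff.mp ?_)
    have h0 : (⊥ : Ideal (MonoidAlgebra K H0)).radical = nilradical (MonoidAlgebra K H0) := rfl
    rw [h0, nilradical_eq_zero]
    rfl
  have : a = 0 := by rw [hbotrad] at ha; exact Ideal.mem_bot.mp ha
  rw [← hπβ, this, map_zero]

end StmtAux2
open Finsupp
namespace StmtAux3

lemma charP_quotient_max {R : Type*} [CommRing R] {p : ℕ} (hp : p.Prime) [CharP R p]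
    (m : Ideal R) (hm : m.IsMaximal) : CharP (R ⧸ m) p := by
  haveI := hm
  have h0 : (p : R ⧸ m) = 0 := by
    rw [← map_natCast (Ideal.Quotient.mk m) p, CharP.cast_eq_zero R p, map_zero]
  have hd : ringChar (R ⧸ m) ∣ p := ringChar.dvd h0
  rcases (Nat.dvd_prime hp).mp hd with h1 | h1
  · exfalso
    haveI := ringChar.of_eq h1
    haveI : Subsingleton (R ⧸ m) := CharP.CharOne.subsingleton
    exact false_of_nontrivial_of_subsingleton (R ⧸ m)
  · exact ringChar.of_eq h1

end StmtAux3
open Finsupp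
namespace StmtAux4

lemma jacobson_bot_MA {R H : Type*} [CommRing R] [CommGroup H] {p : ℕ} [Fact p.Prime]
    [CharP R p] (hJ : (⊥ : Ideal R).jacobson = ⊥) (hH : ∀ h : H, h ^ p = 1 → h = 1) :
    (⊥ : Ideal (MonoidAlgebra R H)).jacobson = ⊥ := by
  classical
  refine le_antisymm ?_ bot_le
  intro β hβ
  rw [Ideal.mem_bot]
  refine MonoidAlgebra.coeff_injective (Finsupp.ext fun h => ?_)
  rw [MonoidAlgebra.coeff_zero, Finsupp.zero_apply]
  have hmem : β.coeff h ∈ (⊥ : Ideal R).jacobson := by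
    rw [Ideal.jacobson]
    refine Ideal.mem_sInf.mpr ?_
    rintro m ⟨-, hm⟩
    haveI := hm
    haveI : CharP (R ⧸ m) p := StmtAux3.charP_quotient_max Fact.out m hm
    haveI : IsReduced (R ⧸ m) := by
      letI := Ideal.Quotient.field m
      infer_instance
    haveI : IsJacobsonRing (R ⧸ m) := by
      letI := Ideal.Quotient.field m
      infer_instance
    have h1 : StmtAux.mapRangeRingHom' (H := H) (Ideal.Quotient.mk m) β ∈
        (⊥ : Ideal (MonoidAlgebra (R ⧸ m) H)).jacobson :=
      StmtAux.jacobson_bot_map _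
        (StmtAux.mapRangeRingHom'_surjective _ Ideal.Quotient.mk_surjective) hβ
    rw [StmtAux2.jacobson_bot_MA_field hH] at h1
    have h2 := Ideal.mem_bot.mp h1
    have h3 : Ideal.Quotient.mk m (β.coeff h) = 0 := by
      rw [← StmtAux.mapRangeRingHom'_apply (Ideal.Quotient.mk m) β h, h2, MonoidAlgebra.coeff_zero, Finsupp.zero_apply]
    exact Ideal.Quotient.eq_zero_iff_mem.mp h3
  rw [hJ] at hmem
  exact Ideal.mem_bot.mp hmem

end StmtAux4


namespace StmtAux5

lemma ker_le_Phi {R G : Type*} [CommRing R] [CommGroup G] (N : Subgroup G)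
    (α : MonoidAlgebra R G)
    (hα : MonoidAlgebra.mapDomainRingHom R (QuotientGroup.mk' N) α = 0) :
    α ∈ Phi R N := by
  classical
  set Q := Ideal.Quotient.mk (Phi R N) with hQ
  let ψ : MonoidAlgebra R (G ⧸ N) →+ MonoidAlgebra R G ⧸ Phi R N :=
    (Finsupp.liftAddHom fun q => (Q : MonoidAlgebra R G →+* _).toAddMonoidHom.comp
      (MonoidAlgebra.singleAddHom (Quotient.out q))).comp MonoidAlgebra.coeffAddEquiv.toAddMonoidHom
  have hψ : ∀ (q : G ⧸ N) (c : R),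
      ψ (MonoidAlgebra.single q c) = Q (MonoidAlgebra.single (Quotient.out q) c) :=
    fun q c => Finsupp.liftAddHom_apply_single _ _ _
  have key : ∀ x : MonoidAlgebra R G,
      ψ (MonoidAlgebra.mapDomainRingHom R (QuotientGroup.mk' N) x) = Q x := by
    intro x
    induction x using MonoidAlgebra.induction_linear with
    | zero => rw [map_zero, map_zero, map_zero]
    | add a b ha hb => rw [map_add, map_add, ha, hb, map_add]
    | single g c =>
        have h1 : MonoidAlgebra.mapDomainRingHom R (QuotientGroup.mk' N)
            (MonoidAlgebra.single g c)
            = MonoidAlgebra.single ((QuotientGroup.mk' N) g) c := MonoidAlgebra.mapDomain_single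
        rw [h1, hψ]
        have hout : (QuotientGroup.mk (Quotient.out ((QuotientGroup.mk' N) g)) : G ⧸ N)
            = QuotientGroup.mk g := QuotientGroup.out_eq' _
        have hn : g⁻¹ * Quotient.out ((QuotientGroup.mk' N) g) ∈ N := by
          rw [← QuotientGroup.eq]
          exact hout.symm
        refine (Ideal.Quotient.mk_eq_mk_iff_sub_mem _ _).mpr ?_
        have hsub : MonoidAlgebra.single (Quotient.out ((QuotientGroup.mk' N) g)) c
            - MonoidAlgebra.single g c
            = MonoidAlgebra.single g c
              * (MonoidAlgebra.of R G (g⁻¹ * Quotient.out ((QuotientGroup.mk' N) g)) - 1) := by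
          rw [mul_sub, mul_one, MonoidAlgebra.of_apply, MonoidAlgebra.single_mul_single, mul_one,
            mul_inv_cancel_left]
        rw [hsub]
        exact Ideal.mul_mem_left _ _ (Ideal.subset_span ⟨_, hn, rfl⟩)
  have h2 : Q α = 0 := by rw [← key, hα, map_zero]
  exact Ideal.Quotient.eq_zero_iff_mem.mp h2

end StmtAux5

theorem stmt4 (R G : Type*) [CommRing R] [CommGroup G]
    (hJ : (⊥ : Ideal R).jacobson = ⊥)
    (p : ℕ) (hp : p.Prime) (hchar : CharP R p) (g : G) (hg : orderOf g = p) :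
    ∃ N : Subgroup G, N ≠ ⊥ ∧ (⊥ : Ideal (MonoidAlgebra R G)).jacobson = Phi R N := by
  classical
  haveI := Fact.mk hp
  haveI := hchar
  let N : Subgroup G :=
    { carrier := {x : G | ∃ k : ℕ, x ^ p ^ k = 1}
      one_mem' := ⟨0, one_pow _⟩
      mul_mem' := by
        rintro a b ⟨k, hk⟩ ⟨l, hl⟩
        refine ⟨k + l, ?_⟩
        rw [mul_pow, pow_add, pow_mul, hk, one_pow, one_mul, mul_comm (p ^ k), pow_mul, hl,
          one_pow]
      inv_mem' := by
        rintro a ⟨k, hk⟩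
        exact ⟨k, by rw [inv_pow, hk, inv_one]⟩ }
  refine ⟨N, ?_, ?_⟩
  · intro hbot
    have hgN : g ∈ N := ⟨1, by rw [pow_one, ← hg, pow_orderOf_eq_one]⟩
    rw [hbot, Subgroup.mem_bot] at hgN
    rw [hgN, orderOf_one] at hg
    exact hp.one_lt.ne' hg.symm
  · have hHquot : ∀ h : G ⧸ N, h ^ p = 1 → h = 1 := by
      intro h hh
      obtain ⟨x, rfl⟩ := QuotientGroup.mk'_surjective N h
      rw [← map_pow] at hh
      have hx : x ^ p ∈ N := (QuotientGroup.eq_one_iff _).mp hh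
      obtain ⟨k, hk⟩ := hx
      have hxN : x ∈ N := by
        refine ⟨k + 1, ?_⟩
        rw [pow_succ, mul_comm (p ^ k) p, pow_mul]
        exact hk
      exact (QuotientGroup.eq_one_iff _).mpr hxN
    haveI : CharP (MonoidAlgebra R G) p := StmtAux.charP_MA R p
    set f := MonoidAlgebra.mapDomainRingHom R (QuotientGroup.mk' N) with hf
    have hsurj : Function.Surjective f := by
      intro y
      refine ⟨MonoidAlgebra.mapDomain Quotient.out y, ?_⟩
      apply MonoidAlgebra.coeff_injective
      show Finsupp.mapDomain (⇑(QuotientGroup.mk' N)) (Finsupp.mapDomain Quotient.out y.coeff) = y.coeff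
      rw [← Finsupp.mapDomain_comp]
      have hco : (⇑(QuotientGroup.mk' N)) ∘ (Quotient.out : G ⧸ N → G) = id := by
        funext q
        exact QuotientGroup.out_eq' q
      rw [hco, Finsupp.mapDomain_id]
    apply le_antisymm
    · intro α hα
      have h1 : f α ∈ (⊥ : Ideal (MonoidAlgebra R (G ⧸ N))).jacobson :=
        StmtAux.jacobson_bot_map f hsurj hα
      rw [StmtAux4.jacobson_bot_MA hJ hHquot] at h1
      exact StmtAux5.ker_le_Phi N α (Ideal.mem_bot.mp h1)
    · rw [Phi, Ideal.span_le]
      rintro _ ⟨n, hn, rfl⟩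
      obtain ⟨k, hk⟩ := hn
      have hnil : IsNilpotent (MonoidAlgebra.of R G n - 1) := by
        refine ⟨p ^ k, ?_⟩
        rw [sub_pow_char_pow, ← map_pow, hk, map_one, one_pow, sub_self]
      have hmem : MonoidAlgebra.of R G n - 1 ∈ (⊥ : Ideal (MonoidAlgebra R G)).radical :=
        mem_nilradical.mpr hnil
      exact Ideal.radical_le_jacobson hmem
end

section
/- Let R be a field of characteristic p > 0 and let G be an abelian p-group. Then the augmentation ideal I(G) of the group ring RG (the kernel of the R-algebra homomorphism RG → R sending every element of G to 1) is the unique prime ideal of RG. -/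
/-- The augmentation ideal of the group ring `MonoidAlgebra R G`: the kernel of the
`R`-algebra homomorphism `MonoidAlgebra R G → R` induced by collapsing `G` to `1`. -/
noncomputable def augIdeal (R G : Type*) [CommRing R] [CommGroup G] :
    Ideal (MonoidAlgebra R G) :=
  RingHom.ker ((MonoidAlgebra.lift R R G) 1)

lemma augIdeal_le_span (R G : Type*) [CommRing R] [CommGroup G] :
    augIdeal R G ≤ Ideal.span (Set.range fun g : G => MonoidAlgebra.of R G g - 1) := by
  intro x hx
  have hε : (MonoidAlgebra.lift R R G) 1 x = 0 := hx
  have hxsum : x = x.coeff.sum fun g r => r • (MonoidAlgebra.of R G g - 1) := by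
    have h1 : x = x.coeff.sum fun g r => r • MonoidAlgebra.of R G g := by
      conv_lhs => rw [← MonoidAlgebra.sum_coeff_single x]
      refine Finsupp.sum_congr fun g _ => ?_
      rw [MonoidAlgebra.of_apply, MonoidAlgebra.smul_single', mul_one]
    have h2 : (x.coeff.sum fun g r => r • (1 : MonoidAlgebra R G)) = 0 := by
      have : (x.coeff.sum fun g r => r • (1 : MonoidAlgebra R G))
          = (x.coeff.sum fun g r => r) • (1 : MonoidAlgebra R G) := by
        rw [Finsupp.sum, Finsupp.sum, Finset.sum_smul]
      rw [this]
      have hε' : (x.coeff.sum fun _ r => r) = 0 := by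
        rw [MonoidAlgebra.lift_apply] at hε
        simpa using hε
      rw [hε', zero_smul]
    calc x = (x.coeff.sum fun g r => r • MonoidAlgebra.of R G g)
          - (x.coeff.sum fun g r => r • (1 : MonoidAlgebra R G)) := by rw [h2, sub_zero, ← h1]
      _ = x.coeff.sum fun g r => r • (MonoidAlgebra.of R G g - 1) := by
          rw [← Finsupp.sum_sub]
          exact Finsupp.sum_congr fun g _ => (smul_sub _ _ _).symm
  rw [hxsum]
  refine Submodule.sum_mem _ fun g _ => ?_
  simp only [Algebra.smul_def]
  exact Ideal.mul_mem_left _ _ (Ideal.subset_span ⟨g, rfl⟩)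

theorem stmt7 (R G : Type*) [Field R] [CommGroup G] (p : ℕ) (hp : 0 < p) [CharP R p]
    (hG : IsPGroup p G) :
    ∀ P : Ideal (MonoidAlgebra R G), P.IsPrime ↔ P = augIdeal R G := by
  have : NeZero p := ⟨hp.ne'⟩
  have hfact : Fact p.Prime := CharP.char_is_prime_of_pos R p
  haveI : CharP (MonoidAlgebra R G) p :=
    charP_of_injective_algebraMap
      (MonoidAlgebra.singleOneRingHom (R := R) (M := G)).injective p
  haveI : ExpChar (MonoidAlgebra R G) p := ExpChar.prime hfact.out
  -- augIdeal is maximal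
  have hsurj : Function.Surjective ((MonoidAlgebra.lift R R G) 1 : MonoidAlgebra R G →+* R) := by
    intro r
    exact ⟨algebraMap R _ r, by simp [AlgHom.commutes]⟩
  have hmax : (augIdeal R G).IsMaximal := RingHom.ker_isMaximal_of_surjective _ hsurj
  -- augIdeal ≤ nilradical
  have hnil : augIdeal R G ≤ nilradical (MonoidAlgebra R G) := by
    refine le_trans (augIdeal_le_span R G) (Ideal.span_le.mpr ?_)
    rintro _ ⟨g, rfl⟩
    obtain ⟨k, hk⟩ := hG g
    refine mem_nilradical.mpr ⟨p ^ k, ?_⟩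
    rw [sub_pow_expChar_pow, one_pow, ← map_pow, hk, map_one, sub_self]
  intro P
  constructor
  · intro hP
    have h1 : augIdeal R G ≤ P := le_trans hnil (nilradical_le_prime P)
    exact (hmax.eq_of_le hP.ne_top h1).symm
  · rintro rfl
    exact hmax.isPrime
end

section
/- Let R be a field of characteristic p > 2 and let G be a nontrivial abelian p-group. Then there exists an element x of the group ring RG such that the principal ideal xRG is a proper ideal of RG and xRG does not belong to Φ(𝔖). Moreover, one may take x = (g − 1)² for any element g of G of order p. -/
lemma coeff_pow_sub_one {R G : Type*} [CommRing R] [CommGroup G] (b : G) (n : ℕ)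
    (hb : ∀ k, 0 < k → k ≤ n → b ^ k ≠ 1) :
    ((MonoidAlgebra.of R G b - 1 : MonoidAlgebra R G) ^ n).coeff 1 = (-1 : R) ^ n := by
  have h : (MonoidAlgebra.of R G b - 1 : MonoidAlgebra R G) ^ n
      = ∑ k ∈ Finset.range (n + 1),
          MonoidAlgebra.single (b ^ k) ((-1 : R) ^ (n - k) * (n.choose k : R)) := by
    rw [sub_eq_add_neg, add_pow]
    refine Finset.sum_congr rfl fun k _ => ?_
    have h1 : (MonoidAlgebra.of R G b : MonoidAlgebra R G) ^ k
        = MonoidAlgebra.single (b ^ k) (1 : R) := by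
      rw [← map_pow]; rfl
    have hneg : (-1 : MonoidAlgebra R G) = MonoidAlgebra.single (1 : G) (-1 : R) := by
      rw [show MonoidAlgebra.single (1 : G) (-1 : R)
            = (-1 : R) • MonoidAlgebra.single (1 : G) (1 : R) by
          rw [MonoidAlgebra.smul_single', neg_one_mul],
        ← MonoidAlgebra.one_def, neg_smul, one_smul]
    have h2 : ((-1 : MonoidAlgebra R G)) ^ (n - k)
        = MonoidAlgebra.single (1 : G) ((-1 : R) ^ (n - k)) := by
      rw [hneg, MonoidAlgebra.single_pow, one_pow]
    have h3 : ((n.choose k : ℕ) : MonoidAlgebra R G)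
        = MonoidAlgebra.single (1 : G) ((n.choose k : R)) :=
      MonoidAlgebra.natCast_def _
    rw [h1, h2, h3, MonoidAlgebra.single_mul_single, MonoidAlgebra.single_mul_single]
    simp
  rw [h, MonoidAlgebra.coeff_sum, Finsupp.finset_sum_apply, Finset.sum_eq_single 0]
  · simp
  · intro k hk hk0
    exact Finsupp.single_eq_of_ne'
      (hb k (Nat.pos_of_ne_zero hk0) (Nat.lt_succ_iff.mp (Finset.mem_range.mp hk)))
  · simp

theorem stmt9 (R G : Type*) [Field R] [CommGroup G] [Nontrivial G]
    (p : ℕ) (hp : 2 < p) [CharP R p] (hG : IsPGroup p G) :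
    (∃ x : MonoidAlgebra R G,
        Ideal.span {x} ≠ ⊤ ∧ ∀ N : Subgroup G, Ideal.span {x} ≠ Phi R N) ∧
    ∀ g : G, orderOf g = p →
      Ideal.span {(MonoidAlgebra.of R G g - 1) ^ 2} ≠ ⊤ ∧
      ∀ N : Subgroup G, Ideal.span {(MonoidAlgebra.of R G g - 1) ^ 2} ≠ Phi R N := by
  have hprime : p.Prime := by
    rcases CharP.char_is_prime_or_zero R p with h | h
    · exact h
    · omega
  haveI : Fact p.Prime := ⟨hprime⟩
  haveI : CharP (MonoidAlgebra R G) p := charP_of_injective_algebraMap' R p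
  haveI : ExpChar (MonoidAlgebra R G) p := ExpChar.prime hprime
  -- key: for any b with p ∣ orderOf b (in particular b ≠ 1 in a p-group), (of b - 1)^(p-1) ≠ 0
  have key : ∀ b : G, b ≠ 1 → (MonoidAlgebra.of R G b - 1 : MonoidAlgebra R G) ^ (p - 1) ≠ 0 := by
    intro b hb
    have hdvd : p ∣ orderOf b := by
      obtain ⟨k, hk⟩ := hG b
      obtain ⟨m, hm, hord⟩ := (Nat.dvd_prime_pow hprime).mp (orderOf_dvd_of_pow_eq_one hk)
      rcases Nat.eq_zero_or_pos m with rfl | hm0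
      · simp at hord
        exact absurd hord hb
      · rw [hord]
        exact dvd_pow_self p hm0.ne'
    have hco : ((MonoidAlgebra.of R G b - 1 : MonoidAlgebra R G) ^ (p - 1)).coeff 1 = (-1 : R) ^ (p - 1) := by
      apply coeff_pow_sub_one
      intro k hk0 hkle hbk
      have h1 : orderOf b ∣ k := orderOf_dvd_of_pow_eq_one hbk
      have h2 : p ∣ k := hdvd.trans h1
      have := Nat.le_of_dvd hk0 h2
      omega
    intro h0
    rw [h0] at hco
    have heven : Even (p - 1) := Nat.Odd.sub_odd (hprime.odd_of_ne_two (by omega)) odd_one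
    rw [heven.neg_one_pow] at hco
    simp only [MonoidAlgebra.coeff_zero, Finsupp.coe_zero, Pi.zero_apply] at hco
    exact one_ne_zero hco.symm
  -- (of g - 1)^p = 0 when g^p = 1
  have hnil : ∀ g : G, orderOf g = p →
      (MonoidAlgebra.of R G g - 1 : MonoidAlgebra R G) ^ p = 0 := by
    intro g hg
    rw [sub_pow_char, ← map_pow, ← hg, pow_orderOf_eq_one, one_pow, map_one, sub_self]
  -- the augmentation map
  let ε : MonoidAlgebra R G →ₐ[R] R := MonoidAlgebra.lift R R G 1
  have hεg : ∀ g : G, ε (MonoidAlgebra.of R G g) = 1 := fun g => by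
    simp [ε]
  -- main part for elements of order p
  have main : ∀ g : G, orderOf g = p →
      Ideal.span {(MonoidAlgebra.of R G g - 1) ^ 2} ≠ ⊤ ∧
      ∀ N : Subgroup G, Ideal.span {(MonoidAlgebra.of R G g - 1) ^ 2} ≠ Phi R N := by
    intro g hg
    have hgne : g ≠ 1 := by
      intro h; rw [h, orderOf_one] at hg; omega
    constructor
    · intro htop
      have h1 : (1 : MonoidAlgebra R G) ∈ Ideal.span {(MonoidAlgebra.of R G g - 1) ^ 2} := by
        rw [htop]; trivial
      obtain ⟨c, hc⟩ := Ideal.mem_span_singleton'.mp h1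
      have := congrArg ε hc
      rw [map_mul, map_pow, map_sub, hεg, map_one, sub_self] at this
      simp at this
    · intro N hN
      -- x ∈ Phi N
      have hxmem : (MonoidAlgebra.of R G g - 1) ^ 2 ∈ Phi R N := by
        rw [← hN]; exact Ideal.subset_span rfl
      by_cases hNtriv : ∀ b ∈ N, b = 1
      · -- Phi N = 0, so (g-1)^2 = 0, so (g-1)^(p-1) = 0, contradiction
        have hPhi : Phi R N ≤ ⊥ := by
          rw [Phi, Ideal.span_le]
          rintro _ ⟨b, hb, rfl⟩
          simp only [SetLike.mem_coe, Ideal.mem_bot]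
          rw [hNtriv b hb, map_one, sub_self]
        have hx0 : (MonoidAlgebra.of R G g - 1 : MonoidAlgebra R G) ^ 2 = 0 :=
          (Ideal.mem_bot).mp (hPhi hxmem)
        apply key g hgne
        have : p - 1 = 2 + (p - 3) := by omega
        rw [this, pow_add, hx0, zero_mul]
      · push_neg at hNtriv
        obtain ⟨b, hbN, hbne⟩ := hNtriv
        have hbmem : MonoidAlgebra.of R G b - 1 ∈ Ideal.span {(MonoidAlgebra.of R G g - 1) ^ 2} := by
          rw [hN, Phi]
          exact Ideal.subset_span ⟨b, hbN, rfl⟩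
        obtain ⟨c, hc⟩ := Ideal.mem_span_singleton'.mp hbmem
        apply key b hbne
        have : (MonoidAlgebra.of R G b - 1 : MonoidAlgebra R G) ^ (p - 1)
            = c ^ (p - 1) * ((MonoidAlgebra.of R G g - 1) ^ 2) ^ (p - 1) := by
          rw [← mul_pow, hc]
        rw [this, ← pow_mul]
        have h2 : 2 * (p - 1) = p + (p - 2) := by omega
        rw [h2, pow_add, hnil g hg, zero_mul, mul_zero]
  refine ⟨?_, main⟩
  -- existence of an element of order p
  obtain ⟨b, hbne⟩ := exists_ne (1 : G)
  obtain ⟨k, hk⟩ := (IsPGroup.iff_orderOf.mp hG) b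
  have hk0 : k ≠ 0 := by
    intro h; rw [h, pow_zero] at hk
    exact hbne (orderOf_eq_one_iff.mp hk)
  set g := b ^ p ^ (k - 1) with hgdef
  have hgp : g ^ p = 1 := by
    have hkk : k - 1 + 1 = k := by omega
    rw [hgdef, ← pow_mul, ← pow_succ, hkk, ← hk, pow_orderOf_eq_one]
  have hgne : g ≠ 1 := by
    intro h
    have : orderOf b ∣ p ^ (k - 1) := orderOf_dvd_of_pow_eq_one h
    rw [hk] at this
    have := Nat.pow_dvd_pow_iff_le_right (hprime.one_lt) |>.mp this
    omega
  have hordg : orderOf g = p := orderOf_eq_prime hgp hgne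
  exact ⟨(MonoidAlgebra.of R G g - 1) ^ 2, main g hordg⟩
end

section
/- Let R be a field of characteristic 2 and let G be an abelian 2-group containing an element g of order 4. Then the principal ideal (g − 1)³·RG of the group ring RG is a proper nonzero ideal of RG that does not belong to Φ(𝔖). -/
theorem stmt10 (R G : Type*) [Field R] [CommGroup G] [CharP R 2]
    (hG : IsPGroup 2 G) (g : G) (hg : orderOf g = 4) :
    Ideal.span {(MonoidAlgebra.of R G g - 1) ^ 3} ≠ ⊤ ∧
    Ideal.span {(MonoidAlgebra.of R G g - 1) ^ 3} ≠ ⊥ ∧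
    ∀ N : Subgroup G, Ideal.span {(MonoidAlgebra.of R G g - 1) ^ 3} ≠ Phi R N := by
  haveI : CharP (MonoidAlgebra R G) 2 := charP_of_injective_algebraMap' R 2
  set x : MonoidAlgebra R G := MonoidAlgebra.of R G g - 1 with hx_def
  -- basic facts about powers of g
  have hg4 : g ^ 4 = 1 := hg ▸ pow_orderOf_eq_one g
  have hgk : ∀ k : ℕ, 0 < k → k < 4 → g ^ k ≠ 1 := by
    intro k hk1 hk2 h
    rw [← orderOf_dvd_iff_pow_eq_one, hg] at h
    have := Nat.le_of_dvd hk1 h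
    omega
  have hg1 : g ≠ 1 := by simpa using hgk 1 (by norm_num) (by norm_num)
  have hg2 : g ^ 2 ≠ 1 := hgk 2 (by norm_num) (by norm_num)
  have hg3 : g ^ 3 ≠ 1 := hgk 3 (by norm_num) (by norm_num)
  -- x^2 = g^2 - 1
  have hsq : x ^ 2 = MonoidAlgebra.of R G (g ^ 2) - 1 := by
    rw [hx_def, sub_pow_char, map_pow, one_pow]
  -- x^4 = 0
  have hx4 : x ^ 4 = 0 := by
    have : x ^ 4 = (x ^ 2) ^ 2 := by ring
    have hgg : (g ^ 2) ^ 2 = 1 := by rw [← pow_mul]; norm_num [hg4]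
    rw [this, hsq, sub_pow_char, ← map_pow, hgg, map_one, one_pow, sub_self]
  -- product expansion
  have hexp : ∀ a b : G, (MonoidAlgebra.of R G a - 1) * (MonoidAlgebra.of R G b - 1)
      = MonoidAlgebra.of R G (a * b) - MonoidAlgebra.of R G a - MonoidAlgebra.of R G b + 1 := by
    intro a b
    rw [map_mul]
    ring
  -- x^3 expansion
  have hcube : x ^ 3 = MonoidAlgebra.of R G (g ^ 3) - MonoidAlgebra.of R G (g ^ 2)
      - MonoidAlgebra.of R G g + 1 := by
    have : x ^ 3 = x ^ 2 * x := by ring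
    rw [this, hsq, hx_def, hexp, ← pow_succ]
  -- x^3 ≠ 0
  have hx3ne : x ^ 3 ≠ 0 := by
    intro h0
    rw [hcube] at h0
    have hfin : (Finsupp.single (g ^ 3) (1 : R) - Finsupp.single (g ^ 2) 1
        - Finsupp.single g 1 + Finsupp.single 1 1 : G →₀ R) = 0 := congrArg MonoidAlgebra.coeff h0
    have := DFunLike.congr_fun hfin 1
    simp [Finsupp.single_apply, hg1, hg2, hg3] at this
  -- x ≠ 0
  have hxne : x ≠ 0 := by
    intro h0
    rw [hx_def] at h0
    have hfin : (Finsupp.single g (1 : R) - Finsupp.single 1 1 : G →₀ R) = 0 := congrArg MonoidAlgebra.coeff h0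
    have := DFunLike.congr_fun hfin g
    simp [Finsupp.single_apply, hg1, Ne.symm hg1] at this
  refine ⟨?_, ?_, ?_⟩
  · -- not the whole ring
    intro h
    rw [Ideal.span_singleton_eq_top] at h
    obtain ⟨u, hu⟩ := h
    apply hxne
    have : x = ↑u⁻¹ * (↑u * x) := by rw [← mul_assoc]; simp
    rw [this, hu]
    have hx31 : (x ^ 3) * x = 0 := by
      have : (x ^ 3) * x = x ^ 4 := by ring
      rw [this, hx4]
    rw [hx31, mul_zero]
  · -- not zero
    intro h
    rw [Ideal.span_singleton_eq_bot] at h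
    exact hx3ne h
  · -- not of the form Phi N
    intro N h
    -- every element of N must be 1
    have key : ∀ n ∈ N, n = (1 : G) := by
      intro n hn
      have hmem : MonoidAlgebra.of R G n - 1 ∈ Ideal.span {x ^ 3} := by
        rw [h]
        exact Ideal.subset_span ⟨n, hn, rfl⟩
      rw [Ideal.mem_span_singleton] at hmem
      obtain ⟨c, hc⟩ := hmem
      have hzero : (MonoidAlgebra.of R G n - 1) * x = 0 := by
        rw [hc]
        have : x ^ 3 * c * x = c * x ^ 4 := by ring
        rw [this, hx4, mul_zero]
      rw [hx_def, hexp] at hzero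
      by_contra hn1
      have hfin : (Finsupp.single (n * g) (1 : R) - Finsupp.single n 1
          - Finsupp.single g 1 + Finsupp.single 1 1 : G →₀ R) = 0 := congrArg MonoidAlgebra.coeff hzero
      by_cases hng : n = g
      · subst hng
        have h1 : ¬ (n = n * n) := by
          intro hh
          exact hg1 (by rwa [eq_comm, mul_eq_left] at hh)
        have h2 : ¬ ((1 : G) = n * n) := by
          intro hh
          exact hg2 (by rw [pow_two]; exact hh.symm)
        have := DFunLike.congr_fun hfin (n * n)
        simp [Finsupp.single_apply, h1, h2] at this
      · have h1 : ¬ (n * g = n) := by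
          intro hh
          exact hg1 (by rwa [mul_eq_left] at hh)
        have h2 : ¬ (g = n) := fun hh => hng hh.symm
        have h3 : ¬ ((1 : G) = n) := fun hh => hn1 hh.symm
        have := DFunLike.congr_fun hfin n
        simp [Finsupp.single_apply, h1, h2, h3] at this
    -- hence Phi R N = ⊥ but x^3 ∈ it
    have hle : Phi R N ≤ ⊥ := by
      rw [Phi, Ideal.span_le]
      rintro _ ⟨n, hn, rfl⟩
      simp [key n hn, MonoidAlgebra.one_def]
    have hx3mem : x ^ 3 ∈ Phi R N := by
      rw [← h]
      exact Ideal.mem_span_singleton_self _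
    exact hx3ne (by simpa using hle hx3mem)
end

section
/- Let R be a field of characteristic 2 and let G be an abelian 2-group which has no element of order 4 and whose cardinality is greater than 2. Then there exist elements f₁, f₂ ∈ G \ {1} with f₁f₂ ∉ {1, f₁, f₂}, and for the element x = 1 + f₁ + f₂ + f₁f₂ of the group ring RG, the principal ideal xRG is a proper ideal of RG that does not belong to Φ(𝔖). -/
lemma aux_dvd_mem {R G : Type*} [Field R] [CommGroup G] [CharP R 2]
    (a b n : G)
    (hdvd : (1 + MonoidAlgebra.of R G a + MonoidAlgebra.of R G b +
        MonoidAlgebra.of R G (a * b)) ∣ (MonoidAlgebra.of R G n - 1)) :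
    n ∈ Subgroup.zpowers a := by
  set Z := Subgroup.zpowers a with hZ
  let φ : MonoidAlgebra R G →+* MonoidAlgebra R (G ⧸ Z) :=
    MonoidAlgebra.mapDomainRingHom R (QuotientGroup.mk' Z)
  haveI : CharP (MonoidAlgebra R (G ⧸ Z)) 2 :=
    charP_of_injective_ringHom (algebraMap R (MonoidAlgebra R (G ⧸ Z))).injective 2
  have hφof : ∀ g : G, φ (MonoidAlgebra.of R G g)
      = MonoidAlgebra.of R (G ⧸ Z) ((g : G ⧸ Z)) := by
    intro g
    show MonoidAlgebra.mapDomain _ (MonoidAlgebra.single g 1) = _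
    simp [MonoidAlgebra.mapDomain_single, MonoidAlgebra.of_apply]
  have ha : ((a : G ⧸ Z)) = 1 := (QuotientGroup.eq_one_iff a).mpr (Subgroup.mem_zpowers a)
  have hφx : φ (1 + MonoidAlgebra.of R G a + MonoidAlgebra.of R G b +
      MonoidAlgebra.of R G (a * b)) = 0 := by
    have hab : ((a * b : G) : G ⧸ Z) = (b : G ⧸ Z) := by
      rw [QuotientGroup.mk_mul, ha, one_mul]
    rw [map_add, map_add, map_add, map_one, hφof, hφof, hφof, ha, hab, map_one]
    have h1 : (1 : MonoidAlgebra R (G ⧸ Z)) + 1 = 0 := CharTwo.add_self_eq_zero 1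
    have h2 : (MonoidAlgebra.of R (G ⧸ Z) (b : G ⧸ Z))
        + MonoidAlgebra.of R (G ⧸ Z) (b : G ⧸ Z) = 0 := CharTwo.add_self_eq_zero _
    calc (1 : MonoidAlgebra R (G ⧸ Z)) + 1 + MonoidAlgebra.of R (G ⧸ Z) (b : G ⧸ Z)
          + MonoidAlgebra.of R (G ⧸ Z) (b : G ⧸ Z)
        = (1 + 1) + (MonoidAlgebra.of R (G ⧸ Z) (b : G ⧸ Z)
            + MonoidAlgebra.of R (G ⧸ Z) (b : G ⧸ Z)) := by ring
      _ = 0 := by rw [h1, h2, add_zero]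
  have h0 := map_dvd φ hdvd
  rw [hφx, zero_dvd_iff, map_sub, map_one, hφof, sub_eq_zero] at h0
  have hone : (MonoidAlgebra.of R (G ⧸ Z)) ((n : G ⧸ Z)) = (MonoidAlgebra.of R (G ⧸ Z)) 1 := by
    rw [map_one]; exact h0
  exact (QuotientGroup.eq_one_iff n).mp (MonoidAlgebra.of_injective hone)

theorem stmt11 (R G : Type*) [Field R] [CommGroup G] [CharP R 2]
    (hG : IsPGroup 2 G) (h4 : ∀ g : G, orderOf g ≠ 4)
    (hcard : 2 < Cardinal.mk G) :
    ∃ f₁ f₂ : G, f₁ ≠ 1 ∧ f₂ ≠ 1 ∧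
      f₁ * f₂ ≠ 1 ∧ f₁ * f₂ ≠ f₁ ∧ f₁ * f₂ ≠ f₂ ∧
      Ideal.span {(1 + MonoidAlgebra.of R G f₁ + MonoidAlgebra.of R G f₂ +
          MonoidAlgebra.of R G (f₁ * f₂) : MonoidAlgebra R G)} ≠ ⊤ ∧
      ∀ N : Subgroup G,
        Ideal.span {(1 + MonoidAlgebra.of R G f₁ + MonoidAlgebra.of R G f₂ +
          MonoidAlgebra.of R G (f₁ * f₂) : MonoidAlgebra R G)} ≠ Phi R N := by
  -- every element has order dividing 2
  have key : ∀ g : G, g ^ 4 = 1 → g ^ 2 = 1 := by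
    intro g hg
    have hd : orderOf g ∣ 4 := orderOf_dvd_of_pow_eq_one hg
    have hd2 : orderOf g ∣ 2 := by
      obtain ⟨m, hm, he⟩ := (Nat.dvd_prime_pow Nat.prime_two).mp
        (show orderOf g ∣ 2 ^ 2 by norm_num; exact hd)
      have hm2 : m ≠ 2 := by rintro rfl; exact h4 g (by rw [he]; norm_num)
      have : (2:ℕ) ^ m ∣ 2 ^ 1 := pow_dvd_pow 2 (by omega)
      rw [he]; simpa using this
    exact orderOf_dvd_iff_pow_eq_one.mp hd2
  have hsq : ∀ g : G, g ^ 2 = 1 := by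
    have main : ∀ k : ℕ, ∀ g : G, g ^ (2:ℕ) ^ k = 1 → g ^ 2 = 1 := by
      intro k
      induction k with
      | zero => intro g hg; simp at hg; simp [hg]
      | succ k ih =>
        intro g hg
        have h2 : (g ^ 2) ^ (2:ℕ) ^ k = 1 := by
          rw [← pow_mul, mul_comm, ← pow_succ] at *
          exact hg
        have := ih _ h2
        exact key g (by rw [show (4:ℕ) = 2 * 2 from rfl, pow_mul]; exact this)
    intro g; obtain ⟨k, hk⟩ := hG g; exact main k g hk
  -- pick f₁ ≠ 1
  haveI : Nontrivial G := Cardinal.one_lt_iff_nontrivial.mp ((by norm_num : (1:Cardinal) < 2).trans hcard)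
  obtain ⟨f₁, hf₁⟩ := exists_ne (1 : G)
  -- pick f₂ ∉ {1, f₁}
  obtain ⟨f₂, hf₂1, hf₂f₁⟩ : ∃ f₂ : G, f₂ ≠ 1 ∧ f₂ ≠ f₁ := by
    by_contra h
    push_neg at h
    have hsub : (Set.univ : Set G) ⊆ {1, f₁} := by
      intro g _
      by_cases hg : g = 1
      · exact Or.inl hg
      · exact Or.inr (h g hg)
    have hle : Cardinal.mk G ≤ 2 := by
      calc Cardinal.mk G = Cardinal.mk (Set.univ : Set G) := Cardinal.mk_univ.symm
        _ ≤ Cardinal.mk ({1, f₁} : Set G) := Cardinal.mk_le_mk_of_subset hsub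
        _ ≤ Cardinal.mk ({f₁} : Set G) + 1 := Cardinal.mk_insert_le
        _ ≤ 2 := by rw [Cardinal.mk_singleton]; norm_num
    exact absurd hcard (not_lt.mpr hle)
  have hinv₁ : f₁⁻¹ = f₁ := by
    have := hsq f₁; rw [pow_two] at this
    exact inv_eq_of_mul_eq_one_right this
  refine ⟨f₁, f₂, hf₁, hf₂1, ?_, ?_, ?_, ?_, ?_⟩
  · intro h
    exact hf₂f₁ (by rw [← hinv₁]; exact eq_inv_of_mul_eq_one_right h)
  · intro h; exact hf₂1 (by rwa [mul_eq_left] at h)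
  · intro h; exact hf₁ (by rwa [mul_eq_right] at h)
  · -- proper ideal
    intro htop
    have h1 : (1 : MonoidAlgebra R G) ∈ Ideal.span {(1 + MonoidAlgebra.of R G f₁ +
        MonoidAlgebra.of R G f₂ + MonoidAlgebra.of R G (f₁ * f₂) : MonoidAlgebra R G)} := by
      rw [htop]; trivial
    have hdvd := Ideal.mem_span_singleton.mp h1
    let aug : MonoidAlgebra R G →ₐ[R] R := MonoidAlgebra.lift R R G 1
    have haugof : ∀ g : G, aug (MonoidAlgebra.of R G g) = 1 := by
      intro g; simp [aug]
    have := map_dvd aug.toRingHom hdvd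
    rw [map_one] at this
    have hx0 : aug.toRingHom (1 + MonoidAlgebra.of R G f₁ + MonoidAlgebra.of R G f₂ +
        MonoidAlgebra.of R G (f₁ * f₂)) = 0 := by
      show aug _ = 0
      rw [map_add, map_add, map_add, map_one, haugof, haugof, haugof]
      have h2 : (2 : R) = 0 := by exact_mod_cast CharP.cast_eq_zero R 2
      linear_combination 2 * h2
    rw [hx0, zero_dvd_iff] at this
    exact one_ne_zero this
  · -- not equal to any Phi R N
    intro N heq
    by_cases htriv : ∀ n ∈ N, n = 1
    · -- Phi R N = ⊥, but x ≠ 0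
      have hxmem : (1 + MonoidAlgebra.of R G f₁ + MonoidAlgebra.of R G f₂ +
          MonoidAlgebra.of R G (f₁ * f₂) : MonoidAlgebra R G) ∈ Phi R N := by
        rw [← heq]; exact Ideal.mem_span_singleton_self _
      have hbot : Phi R N ≤ ⊥ := by
        rw [Phi, Ideal.span_le]
        rintro y ⟨n, hn, rfl⟩
        simp only [SetLike.mem_coe, Ideal.mem_bot]
        rw [htriv n hn, map_one, sub_self]
      have hx0 := Ideal.mem_bot.mp (hbot hxmem)
      have hcoeff : False := by
        have hmul1 : f₁ * f₂ ≠ 1 := by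
          intro h
          exact hf₂f₁ (by rw [← hinv₁]; exact eq_inv_of_mul_eq_one_right h)
        classical
        have hx0' : (Finsupp.single 1 1 + Finsupp.single f₁ 1 + Finsupp.single f₂ 1
            + Finsupp.single (f₁ * f₂) 1 : G →₀ R) = 0 := congrArg MonoidAlgebra.coeff hx0
        have := DFunLike.congr_fun hx0' (1 : G)
        simp only [Finsupp.add_apply, Finsupp.single_apply, Finsupp.coe_zero,
          Pi.zero_apply] at this
        simp [hf₁, hf₂1, hmul1] at this
      exact hcoeff
    · push_neg at htriv
      obtain ⟨n, hnN, hn1⟩ := htriv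
      have hgen : (MonoidAlgebra.of R G n - 1 : MonoidAlgebra R G) ∈ Phi R N :=
        Ideal.subset_span ⟨n, hnN, rfl⟩
      rw [← heq] at hgen
      have hdvd := Ideal.mem_span_singleton.mp hgen
      have hmem₁ : n ∈ Subgroup.zpowers f₁ := aux_dvd_mem f₁ f₂ n hdvd
      have hdvd' : (1 + MonoidAlgebra.of R G f₂ + MonoidAlgebra.of R G f₁ +
          MonoidAlgebra.of R G (f₂ * f₁)) ∣ (MonoidAlgebra.of R G n - 1) := by
        have he : (1 : MonoidAlgebra R G) + MonoidAlgebra.of R G f₂ + MonoidAlgebra.of R G f₁ +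
            MonoidAlgebra.of R G (f₂ * f₁) = 1 + MonoidAlgebra.of R G f₁ +
            MonoidAlgebra.of R G f₂ + MonoidAlgebra.of R G (f₁ * f₂) := by
          rw [mul_comm f₂ f₁]; ring
        rw [he]; exact hdvd
      have hmem₂ : n ∈ Subgroup.zpowers f₂ := aux_dvd_mem f₂ f₁ n hdvd' 
      have mem_eq : ∀ f m : G, f ^ 2 = 1 → m ∈ Subgroup.zpowers f → m ≠ 1 → m = f := by
        intro f m hf hm hm1
        obtain ⟨z, hz⟩ := hm
        have hz' : f ^ z = m := hz
        have hz2 : f ^ (2:ℤ) = 1 := by exact_mod_cast hf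
        have hmod : f ^ z = f ^ (z % 2) := by
          conv_lhs => rw [← Int.emod_add_mul_ediv z 2]
          rw [zpow_add, zpow_mul, hz2, one_zpow, mul_one]
        rcases Int.emod_two_eq z with h | h <;> rw [h] at hmod
        · exact absurd (by rw [← hz', hmod, zpow_zero]) hm1
        · rw [← hz', hmod, zpow_one]
      have e₁ := mem_eq f₁ n (hsq f₁) hmem₁ hn1
      have e₂ := mem_eq f₂ n (hsq f₂) hmem₂ hn1
      exact hf₂f₁ (e₂ ▸ e₁)
end

section
/- Let R be a nontrivial commutative ring and G a nontrivial abelian group, and let RG be the group ring. The following are equivalent: (1) every proper ideal of RG belongs to Φ(𝔖); (2) every proper principal ideal of RG belongs to Φ(𝔖); (3) R is a field of characteristic 2 and G is a group of order 2. -/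
section aux
variable (R : Type*) {G : Type*} [CommRing R] [CommGroup G]

noncomputable def epsAug : MonoidAlgebra R G →ₐ[R] R :=
  MonoidAlgebra.lift R R G 1

lemma epsAug_single (g : G) (r : R) : epsAug R (MonoidAlgebra.single g r : MonoidAlgebra R G) = r := by
  simp [epsAug, MonoidAlgebra.lift_single]

lemma epsAug_of (g : G) : epsAug R (MonoidAlgebra.of R G g) = 1 := by
  simp [MonoidAlgebra.of_apply, epsAug_single]

lemma Phi_le_ker (N : Subgroup G) : Phi R N ≤ RingHom.ker (epsAug R (G := G)) := by
  rw [Phi, Ideal.span_le]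
  rintro _ ⟨n, hn, rfl⟩
  simp [RingHom.mem_ker, epsAug_single]

noncomputable def piQuot (N : Subgroup G) :
    MonoidAlgebra R G →+* MonoidAlgebra R (G ⧸ N) :=
  MonoidAlgebra.mapDomainRingHom R (QuotientGroup.mk' N)

lemma piQuot_single (N : Subgroup G) (g : G) (r : R) :
    piQuot R N (MonoidAlgebra.single g r : MonoidAlgebra R G)
      = MonoidAlgebra.single ((g : G ⧸ N)) r := by
  simp [piQuot, MonoidAlgebra.mapDomain_single]

lemma Phi_le_ker_piQuot (N : Subgroup G) : Phi R N ≤ RingHom.ker (piQuot R N) := by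
  rw [Phi, Ideal.span_le]
  rintro _ ⟨n, hn, rfl⟩
  have : ((n : G ⧸ N)) = 1 := (QuotientGroup.eq_one_iff n).mpr hn
  simp [RingHom.mem_ker, MonoidAlgebra.of_apply, piQuot_single, this, MonoidAlgebra.one_def]

end aux



section applem
variable {R G : Type*} [CommRing R] [CommGroup G]

lemma ma_add_apply (u v : MonoidAlgebra R G) (c : G) : (u + v).coeff c = u.coeff c + v.coeff c := rfl

lemma ma_sub_apply (u v : MonoidAlgebra R G) (c : G) : (u - v).coeff c = u.coeff c - v.coeff c := rfl

lemma ma_neg_apply (u : MonoidAlgebra R G) (c : G) : (-u).coeff c = -(u.coeff c) := rfl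

lemma ma_zero_apply (c : G) : (0 : MonoidAlgebra R G).coeff c = 0 := rfl

lemma ma_single_same (a : G) (b : R) :
    (MonoidAlgebra.single a b : MonoidAlgebra R G).coeff a = b :=
  Finsupp.single_eq_same

lemma ma_single_ne {a c : G} (h : a ≠ c) (b : R) :
    (MonoidAlgebra.single a b : MonoidAlgebra R G).coeff c = 0 :=
  Finsupp.single_eq_of_ne' h

end applem

section dir31
open MonoidAlgebra
variable {R G : Type*} [CommRing R] [CommGroup G]

lemma Phi_bot : Phi R (⊥ : Subgroup G) = ⊥ := by
  rw [Phi]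
  have h : ((⊥ : Subgroup G) : Set G) = {(1 : G)} := Subgroup.coe_bot
  rw [h, Set.image_singleton]
  simp [MonoidAlgebra.one_def]

lemma dir31 [Nontrivial R] (hf : IsField R) (hc : CharP R 2) (hcard : Nat.card G = 2) :
    ∀ J : Ideal (MonoidAlgebra R G), J ≠ ⊤ → ∃ N : Subgroup G, J = Phi R N := by
  -- extract the unique nontrivial element g
  obtain ⟨a, b, hab, huniv⟩ := Nat.card_eq_two_iff.mp hcard
  have hmemab : ∀ c : G, c = a ∨ c = b := by
    intro c
    have : c ∈ ({a, b} : Set G) := by rw [huniv]; trivial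
    simpa using this
  obtain ⟨g, hg1, hmem⟩ : ∃ g : G, g ≠ 1 ∧ ∀ c : G, c = 1 ∨ c = g := by
    rcases hmemab 1 with h | h
    · refine ⟨b, fun hb => hab (by rw [hb, ← h]), fun c => ?_⟩
      rcases hmemab c with h' | h'
      · left; rw [h', ← h]
      · right; exact h'
    · refine ⟨a, fun ha => hab (ha.trans h), fun c => ?_⟩
      rcases hmemab c with h' | h'
      · right; exact h'
      · left; rw [h', ← h]
  have hg2 : g * g = 1 := by
    rcases hmem (g * g) with h | h
    · exact h
    · exact absurd (mul_right_cancel (b := g) (by rw [h, one_mul])) hg1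
  have h2R : (2 : R) = 0 := by
    have := CharP.cast_eq_zero R 2
    simpa using this
  set x : MonoidAlgebra R G := single g 1 - single 1 1 with hxdef
  -- Phi ⊤ = span {x}
  have hPhiTop : Phi R (⊤ : Subgroup G) = Ideal.span {x} := by
    apply le_antisymm
    · rw [Phi, Ideal.span_le]
      rintro _ ⟨n, -, rfl⟩
      show MonoidAlgebra.of R G n - 1 ∈ _
      rcases hmem n with rfl | rfl
      · simp [MonoidAlgebra.one_def]
      · have h : MonoidAlgebra.of R G n - 1 = x := by
          simp [hxdef, MonoidAlgebra.of_apply, MonoidAlgebra.one_def]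
        rw [h]; exact Ideal.subset_span rfl
    · rw [Ideal.span_le, Set.singleton_subset_iff]
      refine Ideal.subset_span ⟨g, trivial, ?_⟩
      simp [hxdef, MonoidAlgebra.of_apply, MonoidAlgebra.one_def]
  -- decomposition of elements
  have hdecomp : ∀ z : MonoidAlgebra R G,
      z = single 1 (z.coeff 1) + single g (z.coeff g) := by
    intro z
    ext c
    rw [ma_add_apply]
    rcases hmem c with rfl | hcg
    · simp only [ma_single_same, ma_single_ne hg1, add_zero]
    · rw [hcg]
      simp only [ma_single_same, ma_single_ne (Ne.symm hg1), zero_add]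
  have heps : ∀ z : MonoidAlgebra R G, epsAug R z = z.coeff 1 + z.coeff g := by
    intro z
    conv_lhs => rw [hdecomp z]
    rw [map_add, epsAug_single, epsAug_single]
  -- units
  have hunit : ∀ z : MonoidAlgebra R G, epsAug R z ≠ 0 → IsUnit z := by
    intro z hz
    have hzz : z * z = single 1 (z.coeff 1 * z.coeff 1 + z.coeff g * z.coeff g) := by
      conv_lhs => rw [hdecomp z]
      rw [add_mul, mul_add, mul_add, single_mul_single, single_mul_single,
        single_mul_single, single_mul_single]
      simp only [one_mul, mul_one, hg2]
      ext c
      rw [ma_add_apply, ma_add_apply, ma_add_apply]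
      rcases hmem c with rfl | hcg
      · simp only [ma_single_same, ma_single_ne hg1]
        ring
      · rw [hcg]
        simp only [ma_single_same, ma_single_ne (Ne.symm hg1)]
        linear_combination (z.coeff 1 * z.coeff g) * h2R
    have hsum : z.coeff 1 + z.coeff g ≠ 0 := by rw [heps z] at hz; exact hz
    obtain ⟨c, hcinv⟩ := hf.mul_inv_cancel hsum
    refine IsUnit.of_mul_eq_one (a := z) (z * single 1 (c * c)) ?_
    rw [← mul_assoc, hzz, single_mul_single, one_mul]
    have h : (z.coeff 1 * z.coeff 1 + z.coeff g * z.coeff g) * (c * c) = 1 := by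
      have hpq : z.coeff 1 * z.coeff 1 + z.coeff g * z.coeff g = (z.coeff 1 + z.coeff g) * (z.coeff 1 + z.coeff g) := by
        linear_combination (-(z.coeff 1 * z.coeff g)) * h2R
      rw [hpq]
      calc (z.coeff 1 + z.coeff g) * (z.coeff 1 + z.coeff g) * (c * c)
          = ((z.coeff 1 + z.coeff g) * c) * ((z.coeff 1 + z.coeff g) * c) := by ring
        _ = 1 := by rw [hcinv]; ring
    rw [h, MonoidAlgebra.one_def]
  intro J hJ
  have hJker : ∀ z ∈ J, epsAug R z = 0 := by
    intro z hz
    by_contra h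
    exact hJ (J.eq_top_of_isUnit_mem hz (hunit z h))
  have hfac : ∀ z ∈ J, z = x * single 1 (-(z.coeff 1)) := by
    intro z hz
    have h0 : z.coeff 1 + z.coeff g = 0 := by rw [← heps z]; exact hJker z hz
    have hzg : z.coeff g = -(z.coeff 1) := by linear_combination h0
    rw [hxdef, sub_mul, single_mul_single, single_mul_single, one_mul, mul_one, one_mul]
    conv_lhs => rw [hdecomp z, hzg]
    ext c
    rw [ma_add_apply, ma_sub_apply]
    rcases hmem c with rfl | hcg
    · simp only [ma_single_same, ma_single_ne hg1, ma_single_ne (Ne.symm hg1)]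
      ring
    · rw [hcg]
      simp only [ma_single_same, ma_single_ne hg1, ma_single_ne (Ne.symm hg1)]
      ring
  have hJle : J ≤ Ideal.span {x} := by
    intro z hz
    rw [Ideal.mem_span_singleton]
    exact ⟨_, hfac z hz⟩
  by_cases hbot : J = ⊥
  · exact ⟨⊥, by rw [hbot, Phi_bot]⟩
  · refine ⟨⊤, le_antisymm (hPhiTop ▸ hJle) ?_⟩
    obtain ⟨z, hzJ, hz0⟩ := Submodule.exists_mem_ne_zero_of_ne_bot hbot
    have hz1 : z.coeff 1 ≠ 0 := by
      intro h
      apply hz0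
      rw [hfac z hzJ, h, neg_zero, MonoidAlgebra.single_zero, mul_zero]
    obtain ⟨d, hd⟩ := hf.mul_inv_cancel (neg_ne_zero.mpr hz1)
    have hxJ : x ∈ J := by
      have h : x = z * single 1 d := by
        rw [hfac z hzJ, mul_assoc, single_mul_single, one_mul, hd,
          ← MonoidAlgebra.one_def, mul_one]
      rw [h]
      exact J.mul_mem_right _ hzJ
    rw [hPhiTop, Ideal.span_le, Set.singleton_subset_iff]
    exact hxJ

end dir31

section dir23
open MonoidAlgebra
variable {R G : Type*} [CommRing R] [Nontrivial R] [CommGroup G] [Nontrivial G]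

lemma dir23
    (h2 : ∀ x : MonoidAlgebra R G, Ideal.span {x} ≠ ⊤ →
      ∃ N : Subgroup G, Ideal.span {x} = Phi R N) :
    IsField R ∧ CharP R 2 ∧ Nat.card G = 2 := by
  classical
  -- units have nonzero augmentation
  have hepsu : ∀ y : MonoidAlgebra R G, IsUnit y → epsAug R y ≠ 0 := by
    intro y hy h0
    obtain ⟨u, rfl⟩ := hy
    have h1 : (u : MonoidAlgebra R G) * ↑u⁻¹ = 1 := u.mul_inv
    have := congrArg (epsAug R) h1
    rw [map_mul, h0, zero_mul, map_one] at this
    exact zero_ne_one this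
  -- elements with nonzero augmentation are units
  have hunit : ∀ y : MonoidAlgebra R G, epsAug R y ≠ 0 → IsUnit y := by
    intro y hy
    by_contra hu
    obtain ⟨N, hN⟩ := h2 y (by rwa [Ne, Ideal.span_singleton_eq_top])
    have hyN : y ∈ Phi R N := hN ▸ Ideal.mem_span_singleton_self y
    exact hy (Phi_le_ker R N hyN)
  have hcancel : ∀ u v : MonoidAlgebra R G, epsAug R v ≠ 0 → u * v = 0 → u = 0 := by
    intro u v hv huv
    obtain ⟨w, hw⟩ := hunit v hv
    have : u = (u * v) * ↑w⁻¹ := by rw [mul_assoc, ← hw, Units.mul_inv, mul_one]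
    rw [huv, zero_mul] at this
    exact this
  have habs : ∀ a b : MonoidAlgebra R G, epsAug R b = 0 → a = a * b → a = 0 := by
    intro a b hb hab
    have h1 : a * (1 - b) = 0 := by rw [mul_sub, mul_one, ← hab, sub_self]
    refine hcancel _ _ ?_ h1
    rw [map_sub, map_one, hb, sub_zero]
    exact one_ne_zero
  have hofinj : ∀ {g : G}, MonoidAlgebra.of R G g = 1 → g = 1 := by
    intro g hg
    exact MonoidAlgebra.of_injective (hg.trans (map_one (MonoidAlgebra.of R G)).symm)
  have heps0 : ∀ g : G, epsAug R (MonoidAlgebra.of R G g - 1) = 0 := by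
    intro g
    rw [map_sub, map_one, epsAug_of, sub_self]
  have hproper : ∀ y : MonoidAlgebra R G, epsAug R y = 0 → Ideal.span {y} ≠ ⊤ := by
    intro y hy h
    rw [Ideal.span_singleton_eq_top] at h
    exact hepsu y h hy
  -- the field structure
  have hfield : IsField R := by
    refine ⟨exists_pair_ne R, mul_comm, ?_⟩
    intro a ha
    have h1 : epsAug R (MonoidAlgebra.single (1 : G) a) = a := epsAug_single R 1 a
    obtain ⟨v, hv⟩ := isUnit_iff_exists_inv.mp
      (hunit (MonoidAlgebra.single (1 : G) a) (by rw [h1]; exact ha))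
    refine ⟨epsAug R v, ?_⟩
    have := congrArg (epsAug R) hv
    rwa [map_mul, h1, map_one] at this
  -- membership gadget
  have hmemgad : ∀ (w : MonoidAlgebra R G) (N : Subgroup G),
      Ideal.span {w} = Phi R N → ∀ m ∈ N,
      ∃ u : MonoidAlgebra R G, MonoidAlgebra.of R G m - 1 = w * u := by
    intro w N hN m hm
    have h1 : MonoidAlgebra.of R G m - 1 ∈ Phi R N := Ideal.subset_span ⟨m, hm, rfl⟩
    rw [← hN, Ideal.mem_span_singleton] at h1
    obtain ⟨u, hu⟩ := h1
    exact ⟨u, hu⟩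
  -- π image of of g - 1
  have hpix : ∀ (N : Subgroup G) (g : G),
      piQuot R N (MonoidAlgebra.of R G g - 1)
        = MonoidAlgebra.single ((g : G ⧸ N)) (1 : R) - 1 := by
    intro N g
    rw [map_sub, map_one, MonoidAlgebra.of_apply, piQuot_single]
  obtain ⟨g₀, hg₀⟩ := exists_ne (1 : G)
  -- characteristic 2
  have h2R : (2 : R) = 0 := by
    set x : MonoidAlgebra R G := MonoidAlgebra.of R G g₀ - 1 with hxdef
    have hx0 : epsAug R x = 0 := heps0 g₀
    obtain ⟨M, hM⟩ := h2 (x * x) (hproper _ (by rw [map_mul, hx0, zero_mul]))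
    have hgM : g₀ ∉ M := by
      intro hg
      obtain ⟨u, hu⟩ := hmemgad _ _ hM g₀ hg
      have hx00 : x = 0 := by
        rw [← hxdef] at hu
        refine habs x (x * u) (by rw [map_mul, hx0, zero_mul]) ?_
        linear_combination hu
      exact hg₀ (hofinj (sub_eq_zero.mp hx00))
    have hπ : piQuot R M (x * x) = 0 :=
      Phi_le_ker_piQuot R M (hM ▸ Ideal.mem_span_singleton_self _)
    set q : G ⧸ M := (g₀ : G ⧸ M) with hqdef
    have hq1 : q ≠ 1 := fun h => hgM ((QuotientGroup.eq_one_iff g₀).mp h)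
    have hqq : q * q ≠ q := fun h =>
      hq1 (mul_left_cancel (a := q) (by rw [h, mul_one]))
    rw [map_mul, hpix M g₀, ← hqdef] at hπ
    set s : MonoidAlgebra R (G ⧸ M) := MonoidAlgebra.single q 1 with hsdef
    have hs2 : s * s = MonoidAlgebra.single (q * q) 1 := by
      rw [hsdef, single_mul_single, one_mul]
    have hexp : (s - 1) * (s - 1)
        = MonoidAlgebra.single (q * q) 1 - s - s + MonoidAlgebra.single (1 : G ⧸ M) 1 := by
      rw [← hs2, ← MonoidAlgebra.one_def]; ring
    rw [hexp] at hπ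
    have hev := congrArg (fun f : MonoidAlgebra R (G ⧸ M) => f.coeff q) hπ
    simp only [ma_sub_apply, ma_add_apply, ma_zero_apply] at hev
    rw [ma_single_ne hqq, hsdef, ma_single_same, ma_single_ne (Ne.symm hq1)] at hev
    linear_combination -hev
  have h2A : (2 : MonoidAlgebra R G) = 0 := by
    calc (2 : MonoidAlgebra R G) = algebraMap R _ (2 : R) := by rw [map_ofNat]
      _ = 0 := by rw [h2R, map_zero]
  -- square identity
  have hsq : ∀ g : G, (MonoidAlgebra.of R G g - 1) * (MonoidAlgebra.of R G g - 1)
      = MonoidAlgebra.of R G (g * g) - 1 := by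
    intro g
    rw [show MonoidAlgebra.of R G (g * g) = MonoidAlgebra.of R G g * MonoidAlgebra.of R G g
      from map_mul _ _ _]
    linear_combination ((1 : MonoidAlgebra R G) - MonoidAlgebra.of R G g) * h2A
  -- every nontrivial element has order two
  have hord : ∀ g : G, g ≠ 1 → g * g = 1 := by
    intro g hg
    by_contra hgg
    set x : MonoidAlgebra R G := MonoidAlgebra.of R G g - 1 with hxdef
    have hx0 : epsAug R x = 0 := heps0 g
    obtain ⟨P, hP⟩ := h2 (x * x * x)
      (hproper _ (by rw [map_mul, map_mul, hx0]; ring))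
    have hgP : g ∉ P := by
      intro hmemg
      obtain ⟨u, hu⟩ := hmemgad _ _ hP g hmemg
      rw [← hxdef] at hu
      have hx00 : x = 0 := by
        refine habs x (x * x * u) (by rw [map_mul, map_mul, hx0]; ring) ?_
        linear_combination hu
      exact hg (hofinj (sub_eq_zero.mp hx00))
    have hggP : g * g ∉ P := by
      intro hmemgg
      obtain ⟨u, hu⟩ := hmemgad _ _ hP (g * g) hmemgg
      have hxxeq : x * x = MonoidAlgebra.of R G (g * g) - 1 := by
        rw [hxdef]; exact hsq g
      have hu2 : x * x = x * x * x * u := hxxeq.trans hu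
      have hxx0 : x * x = 0 := by
        refine habs (x * x) (x * u) (by rw [map_mul, hx0, zero_mul]) ?_
        linear_combination hu2
      exact hgg (hofinj (sub_eq_zero.mp (hxxeq.symm.trans hxx0)))
    have hπ : piQuot R P (x * x * x) = 0 :=
      Phi_le_ker_piQuot R P (hP ▸ Ideal.mem_span_singleton_self _)
    set q : G ⧸ P := (g : G ⧸ P) with hqdef
    have hq1 : q ≠ 1 := fun h => hgP ((QuotientGroup.eq_one_iff g).mp h)
    have hq21 : q * q ≠ 1 := by
      intro h
      apply hggP
      rw [← QuotientGroup.eq_one_iff]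
      push_cast
      exact h
    have hqq : q * q ≠ q := fun h =>
      hq1 (mul_left_cancel (a := q) (by rw [h, mul_one]))
    have hq3q : q * q * q ≠ q := by
      intro h
      exact hq21 (mul_right_cancel (b := q) (by rw [h, one_mul]))
    rw [map_mul, map_mul, hpix P g, ← hqdef] at hπ
    set s : MonoidAlgebra R (G ⧸ P) := MonoidAlgebra.single q 1 with hsdef
    have hs2 : s * s = MonoidAlgebra.single (q * q) 1 := by
      rw [hsdef, single_mul_single, one_mul]
    have hs3 : s * s * s = MonoidAlgebra.single (q * q * q) 1 := by
      rw [hs2, hsdef, single_mul_single, one_mul]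
    have hexp : (s - 1) * (s - 1) * (s - 1)
        = MonoidAlgebra.single (q * q * q) 1
          - MonoidAlgebra.single (q * q) 1 - MonoidAlgebra.single (q * q) 1
          - MonoidAlgebra.single (q * q) 1 + s + s + s
          - MonoidAlgebra.single (1 : G ⧸ P) 1 := by
      rw [← hs3, ← hs2, ← MonoidAlgebra.one_def]; ring
    rw [hexp] at hπ
    have hev := congrArg (fun f : MonoidAlgebra R (G ⧸ P) => f.coeff q) hπ
    simp only [ma_sub_apply, ma_add_apply, ma_zero_apply] at hev
    rw [ma_single_ne hq3q, ma_single_ne hqq, hsdef, ma_single_same,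
      ma_single_ne (Ne.symm hq1)] at hev
    -- hev : 0 - 0 - 0 - 0 + 1 + 1 + 1 - 0 = 0
    have h1R : (1 : R) = 0 := by linear_combination hev - h2R
    exact one_ne_zero h1R
  -- uniqueness of the nontrivial element
  have huniq : ∀ g h : G, g ≠ 1 → h ≠ 1 → g = h := by
    intro g h hg hh
    by_contra hgh
    set x : MonoidAlgebra R G := MonoidAlgebra.of R G g - 1 with hxdef
    set y : MonoidAlgebra R G := MonoidAlgebra.of R G h - 1 with hydef
    have hx0 : epsAug R x = 0 := heps0 g
    have hy0 : epsAug R y = 0 := heps0 h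
    have hxx0 : x * x = 0 := by
      rw [hxdef, hsq g, hord g hg, map_one, sub_self]
    obtain ⟨Q, hQ⟩ := h2 (x * y) (hproper _ (by rw [map_mul, hx0, zero_mul]))
    have hgQ : g ∉ Q := by
      intro hmemg
      obtain ⟨u, hu⟩ := hmemgad _ _ hQ g hmemg
      rw [← hxdef] at hu
      have hx00 : x = 0 := by
        refine habs x (y * u) (by rw [map_mul, hy0, zero_mul]) ?_
        linear_combination hu
      exact hg (hofinj (sub_eq_zero.mp hx00))
    have hhQ : h ∉ Q := by
      intro hmemh
      obtain ⟨u, hu⟩ := hmemgad _ _ hQ h hmemh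
      rw [← hydef] at hu
      have hy00 : y = 0 := by
        refine habs y (x * u) (by rw [map_mul, hx0, zero_mul]) ?_
        linear_combination hu
      exact hh (hofinj (sub_eq_zero.mp hy00))
    have hπ : piQuot R Q (x * y) = 0 :=
      Phi_le_ker_piQuot R Q (hQ ▸ Ideal.mem_span_singleton_self _)
    set qg : G ⧸ Q := (g : G ⧸ Q) with hqgdef
    set qh : G ⧸ Q := (h : G ⧸ Q) with hqhdef
    have hqg1 : qg ≠ 1 := fun h' => hgQ ((QuotientGroup.eq_one_iff g).mp h')
    have hqh1 : qh ≠ 1 := fun h' => hhQ ((QuotientGroup.eq_one_iff h).mp h')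
    have hgh1 : qg * qh ≠ qg := fun h' =>
      hqh1 (mul_left_cancel (a := qg) (by rw [h', mul_one]))
    rw [map_mul, hpix Q g, hpix Q h, ← hqgdef, ← hqhdef] at hπ
    set s : MonoidAlgebra R (G ⧸ Q) := MonoidAlgebra.single qg 1 with hsdef
    set t : MonoidAlgebra R (G ⧸ Q) := MonoidAlgebra.single qh 1 with htdef
    have hst : s * t = MonoidAlgebra.single (qg * qh) 1 := by
      rw [hsdef, htdef, single_mul_single, one_mul]
    have hexp : (s - 1) * (t - 1)
        = MonoidAlgebra.single (qg * qh) 1 - s - t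
          + MonoidAlgebra.single (1 : G ⧸ Q) 1 := by
      rw [← hst, ← MonoidAlgebra.one_def]; ring
    rw [hexp] at hπ
    have hev := congrArg (fun f : MonoidAlgebra R (G ⧸ Q) => f.coeff qg) hπ
    simp only [ma_sub_apply, ma_add_apply, ma_zero_apply] at hev
    rw [ma_single_ne hgh1, hsdef, ma_single_same, ma_single_ne (Ne.symm hqg1)] at hev
    -- hev : 0 - 1 - t qg + 0 = 0
    by_cases hqq : qh = qg
    · -- then h * g ∈ Q
      have hhg : h⁻¹ * g ∈ Q := QuotientGroup.eq.mp hqq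
      have hinv : h⁻¹ = h := inv_eq_of_mul_eq_one_right (hord h hh)
      rw [hinv] at hhg
      obtain ⟨u, hu⟩ := hmemgad _ _ hQ (h * g) hhg
      have hident : MonoidAlgebra.of R G (h * g) - 1 = y * x + y + x := by
        rw [show MonoidAlgebra.of R G (h * g)
          = MonoidAlgebra.of R G h * MonoidAlgebra.of R G g from map_mul _ _ _]
        rw [hxdef, hydef]; ring
      rw [hident] at hu
      -- x + y = x * y * (u - 1)
      have hsum : x + y = x * y * (u - 1) := by linear_combination hu
      have hxy0 : x * y = 0 := by
        have h1 : x * (x + y) = x * (x * y * (u - 1)) := by rw [hsum]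
        have h2' : x * (x * y * (u - 1)) = (x * x) * (y * (u - 1)) := by ring
        rw [h2', hxx0, zero_mul] at h1
        -- h1 : x * (x + y) = 0
        have : x * x + x * y = 0 := by linear_combination h1
        rw [hxx0, zero_add] at this
        exact this
      have hsum0 : x + y = 0 := by rw [hsum, hxy0, zero_mul]
      -- of g + of h = 2 = 0
      have hsum0' : (MonoidAlgebra.of R G g - 1) + (MonoidAlgebra.of R G h - 1) = 0 := by
        rw [← hxdef, ← hydef]; exact hsum0
      have hofsum : MonoidAlgebra.single g (1 : R) + MonoidAlgebra.single h 1 = 0 := by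
        rw [← MonoidAlgebra.of_apply, ← MonoidAlgebra.of_apply]
        linear_combination hsum0' + h2A
      have hev2 := congrArg (fun f : MonoidAlgebra R G => f.coeff g) hofsum
      simp only [ma_add_apply, ma_zero_apply] at hev2
      rw [ma_single_same, ma_single_ne (fun hq => hgh (hq.symm))] at hev2
      exact one_ne_zero (by linear_combination hev2)
    · rw [htdef, ma_single_ne hqq] at hev
      exact one_ne_zero (by linear_combination -hev)
  refine ⟨hfield, ?_, ?_⟩
  · have h2n : ((2 : ℕ) : R) = 0 := by exact_mod_cast h2R
    rcases (Nat.dvd_prime Nat.prime_two).mp (ringChar.dvd h2n) with h | h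
    · exact absurd h CharP.ringChar_ne_one
    · exact ringChar.of_eq h
  · rw [Nat.card_eq_two_iff]
    refine ⟨1, g₀, Ne.symm hg₀, ?_⟩
    rw [Set.eq_univ_iff_forall]
    intro c
    by_cases hc : c = 1
    · left; exact hc
    · right; exact huniq c g₀ hc hg₀

end dir23

theorem stmt12 (R G : Type*) [CommRing R] [Nontrivial R] [CommGroup G] [Nontrivial G] :
    List.TFAE [
      ∀ J : Ideal (MonoidAlgebra R G), J ≠ ⊤ → ∃ N : Subgroup G, J = Phi R N,
      ∀ x : MonoidAlgebra R G, Ideal.span {x} ≠ ⊤ →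
        ∃ N : Subgroup G, Ideal.span {x} = Phi R N,
      IsField R ∧ CharP R 2 ∧ Nat.card G = 2] := by
  tfae_have 1 → 2 := fun h x hx => h _ hx
  tfae_have 2 → 3 := dir23
  tfae_have 3 → 1 := fun ⟨hf, hc, hcard⟩ => dir31 hf hc hcard
  tfae_finish
end

section
/- Let R be a field and G a cyclic group of finite order m with generator g. Let x = Σ_{i=0}^{m−1} r_i g^i be an element of the group ring RG (r_i ∈ R). Let n be a positive integer with n < m, let d = gcd(m,n), and let e = m/d. Then x belongs to the principal ideal (g^n − 1)·RG if and only if for every j with 0 ≤ j ≤ d−1 one has Σ_{i=0}^{e−1} r_{j+id} = 0. -/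
open MonoidAlgebra Finset

theorem memzp {G : Type*} [CommGroup G] (g : G) (n m : ℕ) (t : ℤ) (hord : orderOf g = m) :
    g ^ t ∈ Subgroup.zpowers (g ^ n) ↔ (Nat.gcd m n : ℤ) ∣ t := by
  constructor
  · rintro ⟨k, hk⟩
    simp only at hk
    have : g ^ ((n : ℤ) * k - t) = 1 := by
      rw [zpow_sub, ← zpow_natCast g n, ← zpow_mul] at *
      rw [hk, mul_inv_cancel]
    rw [← orderOf_dvd_iff_zpow_eq_one, hord] at this
    have hd : (Nat.gcd m n : ℤ) ∣ (n : ℤ) * k - ((n:ℤ) * k - t) := by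
      exact dvd_sub (Dvd.dvd.mul_right (Int.natCast_dvd_natCast.2 (Nat.gcd_dvd_right m n)) k)
        (dvd_trans (Int.natCast_dvd_natCast.2 (Nat.gcd_dvd_left m n)) this)
    simpa using hd
  · rintro ⟨q, hq⟩
    refine ⟨(Nat.gcdB m n) * q, ?_⟩
    have hbez : (Nat.gcd m n : ℤ) = m * Nat.gcdA m n + n * Nat.gcdB m n := Nat.gcd_eq_gcd_ab m n
    have h1 : g ^ ((m:ℤ) * (Nat.gcdA m n * q)) = 1 := by
      rw [← orderOf_dvd_iff_zpow_eq_one, hord]; exact ⟨_, rfl⟩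
    simp only
    rw [← zpow_natCast g n, ← zpow_mul, hq, hbez]
    have : (↑m * Nat.gcdA m n + ↑n * Nat.gcdB m n) * q = ↑n * (Nat.gcdB m n * q) + (m : ℤ) * (Nat.gcdA m n * q) := by ring
    rw [this, zpow_add, h1, mul_one]

theorem fiber_eq {M : Type*} [AddCommMonoid M] (m d e j : ℕ) (hm : 0 < m) (hd : 0 < d)
    (hde : d * e = m) (hj : j < d) (f : Fin m → M) :
    ∑ i ∈ Finset.univ.filter (fun i : Fin m => (i : ℕ) % d = j), f i
      = ∑ k ∈ Finset.range e, f ⟨(j + k * d) % m, Nat.mod_lt _ hm⟩ := by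
  have hlt : ∀ k, k < e → j + k * d < m := by
    intro k hk
    calc j + k * d < d + k * d := by omega
    _ = (k + 1) * d := by ring
    _ ≤ e * d := Nat.mul_le_mul_right d (by omega)
    _ = m := by rw [mul_comm]; exact hde
  have key : ∀ i : Fin m, (i : ℕ) % d = j → j + ((i : ℕ) / d) * d = (i : ℕ) := by
    intro i hi
    rw [← hi]; exact Nat.mod_add_div' (i : ℕ) d
  refine Finset.sum_nbij' (fun i => (i : ℕ) / d)
    (fun k => ⟨(j + k * d) % m, Nat.mod_lt _ hm⟩) ?_ ?_ ?_ ?_ ?_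
  · intro i hi
    simp only [Finset.mem_filter, Finset.mem_univ, true_and] at hi
    simp only [Finset.mem_range]
    exact Nat.div_lt_of_lt_mul (by rw [hde]; exact i.2)
  · intro k hk
    simp only [Finset.mem_range] at hk
    simp only [Finset.mem_filter, Finset.mem_univ, true_and]
    rw [Nat.mod_eq_of_lt (hlt k hk)]
    simp [Nat.add_mul_mod_self_right, Nat.mod_eq_of_lt hj]
  · intro i hi
    simp only [Finset.mem_filter, Finset.mem_univ, true_and] at hi
    ext
    simp only
    rw [key i hi, Nat.mod_eq_of_lt i.2]
  · intro k hk
    simp only [Finset.mem_range] at hk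
    simp only
    rw [Nat.mod_eq_of_lt (hlt k hk), Nat.add_mul_div_right _ _ hd, Nat.div_eq_of_lt hj, zero_add]
  · intro i hi
    simp only [Finset.mem_filter, Finset.mem_univ, true_and] at hi
    congr 1
    ext
    simp only
    rw [key i hi, Nat.mod_eq_of_lt i.2]

theorem stmt14 {R G : Type*} [Field R] [CommGroup G] (m : ℕ) (hm : 0 < m)
    (g : G) (hgen : ∀ a : G, a ∈ Subgroup.zpowers g) (hcard : Nat.card G = m)
    (r : Fin m → R) (x : MonoidAlgebra R G)
    (hx : x = ∑ i : Fin m, MonoidAlgebra.single (g ^ (i : ℕ)) (r i))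
    (n : ℕ) (hn0 : 0 < n) (hnm : n < m) :
    x ∈ Ideal.span {MonoidAlgebra.of R G (g ^ n) - 1} ↔
      ∀ j : ℕ, j < Nat.gcd m n →
        ∑ i ∈ Finset.range (m / Nat.gcd m n),
          r ⟨(j + i * Nat.gcd m n) % m, Nat.mod_lt _ hm⟩ = 0 := by
  set d := Nat.gcd m n with hd_def
  have hd : 0 < d := Nat.gcd_pos_of_pos_left n hm
  have hddvd : d ∣ m := Nat.gcd_dvd_left m n
  set e := m / d with he_def
  have hde : d * e = m := Nat.mul_div_cancel' hddvd
  have htop : Subgroup.zpowers g = ⊤ := by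
    rw [Subgroup.eq_top_iff']; exact hgen
  have hord : orderOf g = m := by
    rw [← Nat.card_zpowers, htop, ← hcard]
    exact Nat.card_congr Subgroup.topEquiv.toEquiv
  have hfin : Finite G := Nat.finite_of_card_ne_zero (by omega)
  -- reduce RHS to fiber sums
  have hRHS : (∀ j : ℕ, j < d →
        ∑ i ∈ Finset.range e, r ⟨(j + i * d) % m, Nat.mod_lt _ hm⟩ = 0) ↔
      (∀ j : ℕ, j < d →
        ∑ i ∈ Finset.univ.filter (fun i : Fin m => (i : ℕ) % d = j), r i = 0) := by
    refine forall_congr' fun j => imp_congr_right fun hj => ?_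
    rw [fiber_eq m d e j hm hd hde hj r]
  rw [show (∀ j : ℕ, j < Nat.gcd m n →
        ∑ i ∈ Finset.range (m / Nat.gcd m n),
          r ⟨(j + i * Nat.gcd m n) % m, Nat.mod_lt _ hm⟩ = 0) =
      (∀ j : ℕ, j < d →
        ∑ i ∈ Finset.range e, r ⟨(j + i * d) % m, Nat.mod_lt _ hm⟩ = 0) from rfl, hRHS]
  set H := Subgroup.zpowers (g ^ n) with hH_def
  constructor
  · -- forward
    intro hmem j hj
    obtain ⟨c, hc⟩ := Ideal.mem_span_singleton.mp hmem
    set φ := MonoidAlgebra.mapDomainRingHom R (QuotientGroup.mk' H) with hφ_def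
    have hφ0 : φ x = 0 := by
      rw [hc, map_mul, map_sub, map_one]
      have h1 : φ (MonoidAlgebra.of R G (g^n)) = 1 := by
        have hone : (QuotientGroup.mk' H) (g^n) = 1 :=
          (QuotientGroup.eq_one_iff _).2 (Subgroup.mem_zpowers _)
        rw [MonoidAlgebra.of_apply,
          show φ (MonoidAlgebra.single (g^n) (1:R))
            = MonoidAlgebra.single ((QuotientGroup.mk' H) (g^n)) (1:R) from
            MonoidAlgebra.mapDomain_single,
          hone, MonoidAlgebra.one_def]
      rw [h1, sub_self, zero_mul]
    have hval : φ x = ∑ i : Fin m,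
        MonoidAlgebra.single ((QuotientGroup.mk' H) (g ^ (i:ℕ))) (r i) := by
      rw [hx, map_sum]
      refine Finset.sum_congr rfl fun i _ => ?_
      exact MonoidAlgebra.mapDomain_single
    have hcond : ∀ i : Fin m,
        ((QuotientGroup.mk' H) (g ^ (i:ℕ)) = (QuotientGroup.mk' H) (g ^ j))
          ↔ ((i:ℕ) % d = j) := by
      intro i
      have hpows : (g ^ (i:ℕ))⁻¹ * g ^ j = g ^ ((j:ℤ) - ((i:ℕ):ℤ)) := by
        rw [zpow_sub, zpow_natCast, zpow_natCast, mul_comm]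
      rw [QuotientGroup.mk'_apply, QuotientGroup.mk'_apply, QuotientGroup.eq, hpows,
        hH_def, memzp g n m _ hord, ← hd_def, ← Nat.modEq_iff_dvd]
      unfold Nat.ModEq
      rw [Nat.mod_eq_of_lt hj]
    have h0 : (0 : MonoidAlgebra R (G ⧸ H)).coeff ((QuotientGroup.mk' H) (g ^ j))
        = ∑ i : Fin m, if ((QuotientGroup.mk' H) (g ^ (i:ℕ))
            = (QuotientGroup.mk' H) (g ^ j)) then r i else 0 := by
      rw [← hφ0, hval, MonoidAlgebra.coeff_sum, Finsupp.finset_sum_apply]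
      exact Finset.sum_congr rfl fun i _ => Finsupp.single_apply
    rw [MonoidAlgebra.coeff_zero, Finsupp.zero_apply] at h0
    simp_rw [hcond] at h0
    rw [← Finset.sum_filter] at h0
    exact h0.symm
  · -- backward
    intro hsum
    rw [Ideal.mem_span_singleton]
    have hterm : ∀ i : Fin m, MonoidAlgebra.single (g ^ (i:ℕ)) (r i)
        = MonoidAlgebra.single (g ^ ((i:ℕ) % d)) (r i)
            * (MonoidAlgebra.single (g ^ (((i:ℕ)/d)*d)) (1:R) - 1)
          + MonoidAlgebra.single (g ^ ((i:ℕ) % d)) (r i) := by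
      intro i
      rw [mul_sub, mul_one, sub_add_cancel, MonoidAlgebra.single_mul_single, mul_one, ← pow_add,
        Nat.mod_add_div']
    rw [hx]
    have hsplit : (∑ i : Fin m, MonoidAlgebra.single (g ^ (i:ℕ)) (r i))
        = ∑ i : Fin m, MonoidAlgebra.single (g ^ ((i:ℕ) % d)) (r i)
            * (MonoidAlgebra.single (g ^ (((i:ℕ)/d)*d)) (1:R) - 1)
          + ∑ i : Fin m, MonoidAlgebra.single (g ^ ((i:ℕ) % d)) (r i) := by
      rw [← Finset.sum_add_distrib]
      exact Finset.sum_congr rfl fun i _ => hterm i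
    rw [hsplit]
    have h2 : ∑ i : Fin m, MonoidAlgebra.single (g ^ ((i:ℕ) % d)) (r i) = 0 := by
      rw [← Finset.sum_fiberwise_of_maps_to (g := fun i : Fin m => (i:ℕ) % d)
        (t := Finset.range d)
        (fun i _ => Finset.mem_range.mpr (Nat.mod_lt _ hd))
        (fun i : Fin m => MonoidAlgebra.single (g ^ ((i:ℕ) % d)) (r i))]
      refine Finset.sum_eq_zero fun j hj => ?_
      have hj' : j < d := Finset.mem_range.mp hj
      calc ∑ i ∈ Finset.univ.filter (fun i : Fin m => (i:ℕ) % d = j),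
            MonoidAlgebra.single (g ^ ((i:ℕ)%d)) (r i)
          = ∑ i ∈ Finset.univ.filter (fun i : Fin m => (i:ℕ) % d = j),
            (MonoidAlgebra.singleAddHom (g ^ j)) (r i) := by
            refine Finset.sum_congr rfl fun i hi => ?_
            rw [(Finset.mem_filter.mp hi).2]; rfl
        _ = (MonoidAlgebra.singleAddHom (g ^ j))
            (∑ i ∈ Finset.univ.filter (fun i : Fin m => (i:ℕ) % d = j), r i) :=
            (map_sum _ _ _).symm
        _ = 0 := by rw [hsum j hj']; exact MonoidAlgebra.single_zero _
    rw [h2, add_zero]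
    refine Finset.dvd_sum fun i _ => Dvd.dvd.mul_left ?_ _
    have hmemH : g ^ ((((i:ℕ)/d)*d : ℕ) : ℤ) ∈ H := by
      rw [hH_def, memzp g n m _ hord, ← hd_def]
      exact ⟨(i:ℕ)/d, by push_cast; ring⟩
    rw [zpow_natCast] at hmemH
    obtain ⟨w, hw⟩ := mem_powers_iff_mem_zpowers.mpr hmemH
    have hof : MonoidAlgebra.single (g ^ (((i:ℕ)/d)*d)) (1:R)
        = (MonoidAlgebra.of R G (g^n)) ^ w := by
      rw [← map_pow]
      simp only at hw
      rw [hw]; rfl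
    rw [hof]
    simpa using sub_dvd_pow_sub_pow (MonoidAlgebra.of R G (g^n)) 1 w
end

section
/- Let R be a field and G a cyclic group of finite order m with generator g. Let x = Σ_{i=0}^{m−1} r_i g^i be a nonzero element of the group ring RG, set d = m − rank(A_x), and suppose that d divides m, that Σ_{i=0}^{(m/d)−1} r_{j+id} = 0 for every j with 0 ≤ j ≤ d−1, and that rank(A_x) = rank(Ã_{x,d}). Then the quotient ring RG/xRG is isomorphic as an R-algebra to the group ring R(G/⟨g^d⟩). -/
/-- The circulant-type matrix `A_x` attached to the coefficient vector `r`: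
its `(i,j)` entry is `r_{(m-1-i-j) mod m}` (computed as `(2*m-1-i-j) % m` to avoid
truncated natural subtraction). -/
def circMatrix {R : Type*} [CommRing R] (m : ℕ) (hm : 0 < m) (r : Fin m → R) :
    Matrix (Fin m) (Fin m) R :=
  Matrix.of fun i j => r ⟨(2 * m - 1 - (i : ℕ) - (j : ℕ)) % m, Nat.mod_lt _ hm⟩

/-- The augmented matrix `Ã_{x,n}`: `A_x` with the extra column `b` appended, where
`b_{m-1-n} = 1`, `b_{m-1} = -1` and all other entries vanish. -/
def circMatrixAug {R : Type*} [CommRing R] (m n : ℕ) (hm : 0 < m) (r : Fin m → R) :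
    Matrix (Fin m) (Fin (m + 1)) R :=
  Matrix.of fun i j =>
    if h : (j : ℕ) < m then circMatrix m hm r i ⟨j, h⟩
    else if (i : ℕ) = m - 1 - n then 1
    else if (i : ℕ) = m - 1 then -1
    else 0

open Module in
theorem stmt17 {R G : Type*} [Field R] [CommGroup G] (m : ℕ) (hm : 0 < m)
    (g : G) (hgen : ∀ a : G, a ∈ Subgroup.zpowers g) (hcard : Nat.card G = m)
    (r : Fin m → R) (x : MonoidAlgebra R G)
    (hx : x = ∑ i : Fin m, MonoidAlgebra.single (g ^ (i : ℕ)) (r i)) (hx0 : x ≠ 0)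
    (d : ℕ) (hd : d = m - (circMatrix m hm r).rank) (hdvd : d ∣ m)
    (hsum : ∀ j : ℕ, j < d →
      ∑ i ∈ Finset.range (m / d), r ⟨(j + i * d) % m, Nat.mod_lt _ hm⟩ = 0)
    (hrank : (circMatrix m hm r).rank = (circMatrixAug m d hm r).rank) :
    Nonempty ((MonoidAlgebra R G ⧸ Ideal.span {x}) ≃ₐ[R]
      MonoidAlgebra R (G ⧸ Subgroup.zpowers (g ^ d))) := by
  classical
  have hfin : Finite G := Nat.finite_of_card_ne_zero (by omega)
  have hd0 : 0 < d := Nat.pos_of_ne_zero fun h => by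
    rw [h] at hdvd; exact absurd (zero_dvd_iff.mp hdvd) (by omega)
  have horder : orderOf g = m := by
    have htop : Subgroup.zpowers g = ⊤ := by
      rw [Subgroup.eq_top_iff']; exact hgen
    rw [← Nat.card_zpowers, htop]
    exact (Nat.card_congr Subgroup.topEquiv.toEquiv).trans hcard
  have hinj : Function.Injective (fun i : Fin m => g ^ (i : ℕ)) := by
    intro i j h
    have h2 : (i : ℕ) % m = (j : ℕ) % m := by
      have := pow_eq_pow_iff_modEq.mp h
      rwa [horder] at this
    rw [Nat.mod_eq_of_lt i.2, Nat.mod_eq_of_lt j.2] at h2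
    exact Fin.ext h2
  let e : Fin m ≃ G := Equiv.ofBijective _
    ((Nat.bijective_iff_injective_and_card _).mpr ⟨hinj, by simp [hcard]⟩)
  have he : ∀ i : Fin m, e i = g ^ (i : ℕ) := fun i => rfl
  let b : Basis (Fin m) R (MonoidAlgebra R G) := (MonoidAlgebra.basis G R).reindex e.symm
  have hbapp : ∀ i : Fin m, b i = MonoidAlgebra.single (g ^ (i : ℕ)) 1 := by
    intro i
    rw [show b i = MonoidAlgebra.basis G R (e.symm.symm i) from Module.Basis.reindex_apply _ _ i]
    rw [Equiv.symm_symm, he]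
    rfl
  have hbrepr : ∀ (v : MonoidAlgebra R G) (i : Fin m), b.repr v i = v.coeff (g ^ (i : ℕ)) := by
    intro v i
    rw [show b.repr v i = (MonoidAlgebra.basis G R).repr v (e.symm.symm i) from
      Module.Basis.repr_reindex_apply _ _ _ _]
    rw [Equiv.symm_symm, he]
    rfl
  have hxval : ∀ t : ℕ, x.coeff (g ^ t) = r ⟨t % m, Nat.mod_lt _ hm⟩ := by
    intro t
    rw [hx, MonoidAlgebra.coeff_sum, Finsupp.finset_sum_apply]
    have hgt : g ^ (t % m) = g ^ t := by
      conv_rhs => rw [← pow_mod_orderOf]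
      rw [horder]
    rw [Finset.sum_eq_single (⟨t % m, Nat.mod_lt _ hm⟩ : Fin m)]
    · rw [MonoidAlgebra.coeff_single, Finsupp.single_apply, if_pos hgt]
    · intro i _ hne
      rw [MonoidAlgebra.coeff_single, Finsupp.single_apply, if_neg]
      intro hcon
      exact hne (hinj (show g ^ ((i : Fin m) : ℕ) = g ^ (t % m) from hcon.trans hgt.symm))
    · intro h; exact absurd (Finset.mem_univ _) h
  have hMentry : ∀ i j : Fin m, (LinearMap.toMatrix b b (LinearMap.mulLeft R x)) i j
      = circMatrix m hm r (Fin.rev i) j := by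
    intro i j
    rw [LinearMap.toMatrix_apply, LinearMap.mulLeft_apply, hbapp, hbrepr,
      MonoidAlgebra.coeff_mul_single_apply]
    have hg : g ^ (i : ℕ) * (g ^ (j : ℕ))⁻¹ = g ^ (m + i - j) := by
      rw [eq_comm, eq_mul_inv_iff_mul_eq, ← pow_add]
      have h1 : m + (i:ℕ) - j + j = m + i := by omega
      have h2 : g ^ m = 1 := by rw [← horder]; exact pow_orderOf_eq_one g
      rw [h1, pow_add, h2, one_mul]
    rw [hg, hxval, mul_one]
    show r _ = r _
    congr 1
    apply Fin.ext
    show (m + (i:ℕ) - j) % m = (2 * m - 1 - ((Fin.rev i : ℕ)) - j) % m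
    rw [Fin.val_rev]
    congr 1
    have := i.2; have := j.2
    omega
  -- rank of the span of x
  have hM : LinearMap.toMatrix b b (LinearMap.mulLeft R x)
      = (circMatrix m hm r).submatrix (⇑(Fin.revPerm)) (⇑(Equiv.refl (Fin m))) := by
    ext i j
    rw [Matrix.submatrix_apply]
    simpa using hMentry i j
  have hspan : Submodule.restrictScalars R (Ideal.span {x} : Ideal (MonoidAlgebra R G))
      = LinearMap.range (LinearMap.mulLeft R x) := by
    ext a
    simp only [Submodule.restrictScalars_mem, Ideal.mem_span_singleton', LinearMap.mem_range,
      LinearMap.mulLeft_apply]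
    constructor
    · rintro ⟨c, rfl⟩; exact ⟨c, mul_comm x c⟩
    · rintro ⟨c, rfl⟩; exact ⟨c, mul_comm c x⟩
  have hrank1 : (circMatrix m hm r).rank
      = finrank R (Submodule.restrictScalars R (Ideal.span {x} : Ideal (MonoidAlgebra R G))) := by
    rw [hspan, ← Matrix.rank_submatrix (circMatrix m hm r) Fin.revPerm (Equiv.refl _), ← hM,
      Matrix.rank_eq_finrank_range_toLin _ b b, Matrix.toLin_toMatrix]
  have hrkle : (circMatrix m hm r).rank ≤ m := by
    have := (circMatrix m hm r).rank_le_card_width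
    simpa using this
  have hrk : finrank R (Submodule.restrictScalars R
      (Ideal.span {x} : Ideal (MonoidAlgebra R G))) = m - d := by
    rw [← hrank1]; omega
  -- the projection to the quotient group ring
  set N := Subgroup.zpowers (g ^ d) with hN
  set π : MonoidAlgebra R G →ₐ[R] MonoidAlgebra R (G ⧸ N) :=
    MonoidAlgebra.mapDomainAlgHom R R (QuotientGroup.mk' N) with hπ
  have hsurj : Function.Surjective π := by
    intro y
    refine ⟨MonoidAlgebra.mapDomain (Function.surjInv (QuotientGroup.mk'_surjective N)) y, ?_⟩
    apply MonoidAlgebra.coeff_injective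
    show Finsupp.mapDomain _ (Finsupp.mapDomain _ y.coeff) = y.coeff
    rw [← Finsupp.mapDomain_comp]
    have : (⇑(QuotientGroup.mk' N)) ∘ (Function.surjInv (QuotientGroup.mk'_surjective N)) = id :=
      funext fun a => Function.surjInv_eq _ a
    rw [this, Finsupp.mapDomain_id]
  have hgbar : ((QuotientGroup.mk' N) g) ^ d = 1 := by
    rw [← map_pow]
    exact (QuotientGroup.eq_one_iff _).mpr (Subgroup.mem_zpowers _)
  have hπx : π x = 0 := by
    rw [hx, map_sum]
    have h1 : ∀ i : Fin m, π (MonoidAlgebra.single (g ^ (i : ℕ)) (r i))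
        = MonoidAlgebra.single (((QuotientGroup.mk' N) g) ^ (i : ℕ)) (r i) := by
      intro i
      show MonoidAlgebra.mapDomain _ _ = _
      rw [MonoidAlgebra.mapDomain_single, map_pow]
    rw [Finset.sum_congr rfl fun i _ => h1 i]
    set gb := (QuotientGroup.mk' N) g with hgb
    let F : ℕ → MonoidAlgebra R (G ⧸ N) :=
      fun t => MonoidAlgebra.single (gb ^ t) (r ⟨t % m, Nat.mod_lt _ hm⟩)
    have h2 : ∑ i : Fin m, MonoidAlgebra.single (gb ^ (i : ℕ)) (r i)
        = ∑ i ∈ Finset.range m, F i := by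
      rw [← Fin.sum_univ_eq_sum_range]
      refine Finset.sum_congr rfl fun i _ => ?_
      simp only [F]
      have he2 : (⟨(i : ℕ) % m, Nat.mod_lt _ hm⟩ : Fin m) = i := Fin.ext (Nat.mod_eq_of_lt i.2)
      rw [he2]
    rw [h2]
    have h3 : ∑ i ∈ Finset.range m, F i
        = ∑ p ∈ Finset.range d ×ˢ Finset.range (m / d), F (p.1 + p.2 * d) := by
      refine Finset.sum_nbij' (fun t => (t % d, t / d)) (fun p => p.1 + p.2 * d) ?_ ?_ ?_ ?_ ?_
      · intro a ha
        simp only [Finset.mem_range, Finset.mem_product] at *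
        exact ⟨Nat.mod_lt _ hd0, Nat.div_lt_div_of_lt_of_dvd hdvd ha⟩
      · intro p hp
        simp only [Finset.mem_range, Finset.mem_product] at *
        have h4 : (m / d) * d = m := Nat.div_mul_cancel hdvd
        have h5 : (p.2 + 1) * d ≤ (m / d) * d := Nat.mul_le_mul_right d hp.2
        have h6 : (p.2 + 1) * d = p.2 * d + d := by ring
        omega
      · intro a _; exact (Nat.mod_add_div' a d)
      · intro p hp
        simp only [Finset.mem_range, Finset.mem_product] at hp
        have e1 : (p.1 + p.2 * d) % d = p.1 := by
          rw [Nat.add_mul_mod_self_right, Nat.mod_eq_of_lt hp.1]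
        have e2 : (p.1 + p.2 * d) / d = p.2 := by
          rw [Nat.add_mul_div_right _ _ hd0, Nat.div_eq_of_lt hp.1, zero_add]
        simp [e1, e2]
      · intro a _; rw [Nat.mod_add_div' a d]
    rw [h3, Finset.sum_product]
    refine Finset.sum_eq_zero fun j hj => ?_
    simp only [Finset.mem_range] at hj
    have h6 : ∀ k ∈ Finset.range (m / d), F (j + k * d)
        = MonoidAlgebra.single (gb ^ j) (r ⟨(j + k * d) % m, Nat.mod_lt _ hm⟩) := by
      intro k _
      simp only [F]
      congr 1
      rw [pow_add, pow_mul', hgbar, one_pow, mul_one]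
    rw [Finset.sum_congr rfl h6]
    apply MonoidAlgebra.coeff_injective
    rw [MonoidAlgebra.coeff_sum]
    simp only [MonoidAlgebra.coeff_single]
    rw [← Finsupp.single_finset_sum, hsum j hj, Finsupp.single_zero]
    rfl
  -- dimension counting
  haveI : Module.Finite R (MonoidAlgebra R G) := Module.Finite.of_basis b
  haveI : Finite (G ⧸ N) := Quotient.finite _
  haveI : Fintype (G ⧸ N) := Fintype.ofFinite _
  let b2 : Basis (G ⧸ N) R (MonoidAlgebra R (G ⧸ N)) := MonoidAlgebra.basis (G ⧸ N) R
  haveI : Module.Finite R (MonoidAlgebra R (G ⧸ N)) := Module.Finite.of_basis b2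
  have hfr1 : finrank R (MonoidAlgebra R G) = m := by
    rw [finrank_eq_card_basis b, Fintype.card_fin]
  have hcardN : Nat.card N = m / d := by
    rw [hN, Nat.card_zpowers, orderOf_pow, horder, Nat.gcd_eq_right hdvd]
  have hq : Nat.card (G ⧸ N) = d := by
    have h1 := Subgroup.card_eq_card_quotient_mul_card_subgroup N
    rw [hcard, hcardN] at h1
    have h2 : d * (m / d) = m := Nat.mul_div_cancel' hdvd
    have h3 : 0 < m / d := Nat.div_pos (Nat.le_of_dvd hm hdvd) hd0
    exact Nat.eq_of_mul_eq_mul_right h3 (h1.symm.trans h2.symm)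
  have hfr2 : finrank R (MonoidAlgebra R (G ⧸ N)) = d := by
    rw [finrank_eq_card_basis b2, ← Nat.card_eq_fintype_card, hq]
  have hrange : LinearMap.range π.toLinearMap = ⊤ := LinearMap.range_eq_top.mpr hsurj
  have hrn := LinearMap.finrank_range_add_finrank_ker π.toLinearMap
  rw [hrange, finrank_top, hfr2, hfr1] at hrn
  have hkerSub : (Submodule.restrictScalars R
      (RingHom.ker (π : MonoidAlgebra R G →+* MonoidAlgebra R (G ⧸ N))))
      = LinearMap.ker π.toLinearMap := by
    ext a
    simp [RingHom.mem_ker, LinearMap.mem_ker]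
  have hle : (Ideal.span {x} : Ideal (MonoidAlgebra R G))
      ≤ RingHom.ker (π : MonoidAlgebra R G →+* MonoidAlgebra R (G ⧸ N)) :=
    (Ideal.span_singleton_le_iff_mem _).mpr (RingHom.mem_ker.mpr hπx)
  have hfrker : finrank R (Submodule.restrictScalars R
      (RingHom.ker (π : MonoidAlgebra R G →+* MonoidAlgebra R (G ⧸ N)))) = m - d := by
    rw [hkerSub]; omega
  have heq : (Ideal.span {x} : Ideal (MonoidAlgebra R G))
      = RingHom.ker (π : MonoidAlgebra R G →+* MonoidAlgebra R (G ⧸ N)) := by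
    apply Submodule.restrictScalars_injective R
    apply Submodule.eq_of_le_of_finrank_le
    · exact fun a ha => hle ha
    · rw [hrk, hfrker]
  exact ⟨(Ideal.quotientEquivAlgOfEq R heq).trans (Ideal.quotientKerAlgEquivOfSurjective hsurj)⟩
end

section
/- Let R be an integral domain and G an infinite cyclic group, and let x be a nonzero element of the group ring RG. Then the following are equivalent: (1) xRG = Φ(N) for some nontrivial subgroup N of G; (2) x = u·g₁ − u·g₂ for some unit u of R and some elements g₁, g₂ of G. Moreover, if these hold, then xRG = Φ(⟨h⟩) where h = g₁g₂⁻¹. -/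
lemma aux_uniqueProds {G : Type*} [CommGroup G] [IsCyclic G] [Infinite G] : UniqueProds G := by
  obtain ⟨g, hg⟩ := IsCyclic.exists_generator (α := G)
  have hord : ¬ IsOfFinOrder g := by
    have h0 := Infinite.orderOf_eq_zero_of_forall_mem_zpowers hg
    rwa [orderOf_eq_zero_iff] at h0
  have hinj : Function.Injective (zpowersHom G g) := by
    have : (zpowersHom G g : Multiplicative ℤ → G) =
        (fun n : ℤ => g ^ n) ∘ Multiplicative.toAdd := rfl
    rw [this]
    exact (injective_zpow_iff_not_isOfFinOrder.2 hord).comp Multiplicative.toAdd.injective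
  have hsurj : Function.Surjective (zpowersHom G g) := by
    intro x
    obtain ⟨k, hk⟩ := hg x
    exact ⟨Multiplicative.ofAdd k, hk⟩
  let e : Multiplicative ℤ ≃* G :=
    MulEquiv.ofBijective (zpowersHom G g) ⟨hinj, hsurj⟩
  exact e.uniqueProds_iff.mp inferInstance

lemma aux_units_triv {R G : Type*} [CommRing R] [IsDomain R] [CommGroup G] [UniqueProds G]
    {x y : MonoidAlgebra R G} (h : x * y = 1) :
    ∃ (r : Rˣ) (a : G), x = MonoidAlgebra.single a (r : R) := by
  classical
  have hTU : TwoUniqueProds G := UniqueProds.toTwoUniqueProds_of_group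
  have hx : x ≠ 0 := by rintro rfl; rw [zero_mul] at h; exact one_ne_zero h.symm
  have hy : y ≠ 0 := by rintro rfl; rw [mul_zero] at h; exact one_ne_zero h.symm
  have hcard : x.coeff.support.card * y.coeff.support.card ≤ 1 := by
    by_contra hc
    push_neg at hc
    obtain ⟨p1, h1, p2, h2, hne, hu1, hu2⟩ := TwoUniqueProds.uniqueMul_of_one_lt_card hc
    rw [Finset.mem_product] at h1 h2
    have e1 : (x * y).coeff (p1.1 * p1.2) ≠ 0 := by
      rw [MonoidAlgebra.mul_apply_mul_eq_mul_of_uniqueMul hu1]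
      exact mul_ne_zero (Finsupp.mem_support_iff.1 h1.1) (Finsupp.mem_support_iff.1 h1.2)
    have e2 : (x * y).coeff (p2.1 * p2.2) ≠ 0 := by
      rw [MonoidAlgebra.mul_apply_mul_eq_mul_of_uniqueMul hu2]
      exact mul_ne_zero (Finsupp.mem_support_iff.1 h2.1) (Finsupp.mem_support_iff.1 h2.2)
    rw [h] at e1 e2
    have hp1 : p1.1 * p1.2 = 1 := by
      by_contra hne1
      exact e1 (by rw [MonoidAlgebra.one_def, MonoidAlgebra.coeff_single, Finsupp.single_apply_eq_zero]; intro hh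
                   exact (hne1 hh).elim)
    have hp2 : p2.1 * p2.2 = 1 := by
      by_contra hne1
      exact e2 (by rw [MonoidAlgebra.one_def, MonoidAlgebra.coeff_single, Finsupp.single_apply_eq_zero]; intro hh
                   exact (hne1 hh).elim)
    have := hu1 h2.1 h2.2 (by rw [hp2, hp1])
    exact hne (Prod.ext this.1.symm this.2.symm)
  have hxp : 0 < x.coeff.support.card :=
    Finset.card_pos.2 (Finsupp.support_nonempty_iff.2 (MonoidAlgebra.coeff_eq_zero.not.2 hx))
  have hyp : 0 < y.coeff.support.card :=
    Finset.card_pos.2 (Finsupp.support_nonempty_iff.2 (MonoidAlgebra.coeff_eq_zero.not.2 hy))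
  have hx1 : x.coeff.support.card = 1 :=
    le_antisymm (le_trans (Nat.le_mul_of_pos_right _ hyp) hcard) hxp
  have hy1 : y.coeff.support.card = 1 :=
    le_antisymm (le_trans (Nat.le_mul_of_pos_left _ hxp) hcard) hyp
  obtain ⟨a, r, hr, hxe⟩ := Finsupp.card_support_eq_one'.1 hx1
  replace hxe : x = MonoidAlgebra.single a r := MonoidAlgebra.coeff_injective hxe
  obtain ⟨b, s, hs, hye⟩ := Finsupp.card_support_eq_one'.1 hy1
  replace hye : y = MonoidAlgebra.single b s := MonoidAlgebra.coeff_injective hye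
  rw [hxe, hye] at h
  have hmul : MonoidAlgebra.single (a * b) (r * s) = (1 : MonoidAlgebra R G) := by
    rw [← MonoidAlgebra.single_mul_single]; exact h
  have hrs : r * s = 1 := by
    have happ := congrArg (fun f : MonoidAlgebra R G => f.coeff (a * b)) hmul
    simp only [MonoidAlgebra.one_def, MonoidAlgebra.coeff_single, Finsupp.single_apply, if_pos rfl] at happ
    by_cases hab : a * b = 1
    · simpa [hab] using happ
    · rw [if_neg (Ne.symm hab)] at happ
      exact absurd happ (mul_ne_zero hr hs)
  exact ⟨⟨r, s, hrs, by rwa [mul_comm] at hrs⟩, a, hxe⟩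

lemma aux_Phi_zpowers (R : Type*) {G : Type*} [CommRing R] [CommGroup G] (h : G) :
    Phi R (Subgroup.zpowers h) = Ideal.span {MonoidAlgebra.of R G h - 1} := by
  apply le_antisymm
  · rw [Phi, Ideal.span_le]
    rintro _ ⟨n, hn, rfl⟩
    have key : ∀ n ∈ Subgroup.zpowers h,
        MonoidAlgebra.of R G n - 1 ∈ Ideal.span {MonoidAlgebra.of R G h - 1} := by
      intro m hm
      rw [Subgroup.zpowers_eq_closure] at hm
      induction hm using Subgroup.closure_induction with
      | mem z hz =>
        rw [Set.mem_singleton_iff] at hz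
        subst hz
        exact Ideal.subset_span rfl
      | one => rw [map_one, sub_self]; exact zero_mem _
      | mul a b _ _ iha ihb =>
        have heq : MonoidAlgebra.of R G (a * b) - 1 =
            MonoidAlgebra.of R G a * (MonoidAlgebra.of R G b - 1) +
              (MonoidAlgebra.of R G a - 1) := by
          rw [map_mul]; ring
        rw [heq]
        exact add_mem (Ideal.mul_mem_left _ _ ihb) iha
      | inv a _ iha =>
        have h1 : MonoidAlgebra.of R G a⁻¹ * MonoidAlgebra.of R G a = 1 := by
          rw [← map_mul, inv_mul_cancel, map_one]
        have heq : MonoidAlgebra.of R G a⁻¹ - 1 =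
            -(MonoidAlgebra.of R G a⁻¹ * (MonoidAlgebra.of R G a - 1)) := by
          rw [mul_sub, h1, mul_one, neg_sub]
        rw [heq]
        exact neg_mem (Ideal.mul_mem_left _ _ iha)
    exact key n hn
  · rw [Ideal.span_le, Set.singleton_subset_iff]
    exact Ideal.subset_span ⟨h, Subgroup.mem_zpowers h, rfl⟩

lemma aux_subgroup_cyclic {G : Type*} [Group G] [IsCyclic G] (N : Subgroup G) :
    ∃ h : G, N = Subgroup.zpowers h := by
  obtain ⟨⟨h, hh⟩, hgen⟩ := IsCyclic.exists_generator (α := N)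
  refine ⟨h, le_antisymm ?_ ?_⟩
  · intro x hx
    obtain ⟨k, hk⟩ := hgen ⟨x, hx⟩
    exact ⟨k, by simpa using congrArg Subtype.val hk⟩
  · rw [Subgroup.zpowers_le]
    exact hh

theorem stmt18 {R G : Type*} [CommRing R] [IsDomain R] [CommGroup G]
    [IsCyclic G] [Infinite G] (x : MonoidAlgebra R G) (hx0 : x ≠ 0) :
    ((∃ N : Subgroup G, N ≠ ⊥ ∧ Ideal.span {x} = Phi R N) ↔
      ∃ (u : Rˣ) (g₁ g₂ : G),
        x = MonoidAlgebra.single g₁ (u : R) - MonoidAlgebra.single g₂ (u : R)) ∧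
    ∀ (u : Rˣ) (g₁ g₂ : G),
      x = MonoidAlgebra.single g₁ (u : R) - MonoidAlgebra.single g₂ (u : R) →
        Ideal.span {x} = Phi R (Subgroup.zpowers (g₁ * g₂⁻¹)) := by
  classical
  have hUP : UniqueProds G := aux_uniqueProds
  have hNT : Nontrivial (MonoidAlgebra R G) := inferInstance
  have hDom : IsDomain (MonoidAlgebra R G) := NoZeroDivisors.to_isDomain _
  -- the unit `single g u` of the group ring
  have unit_single : ∀ (u : Rˣ) (g : G), IsUnit (MonoidAlgebra.single g (u : R)) := by
    intro u g
    refine ⟨⟨MonoidAlgebra.single g (u : R), MonoidAlgebra.single g⁻¹ ((u⁻¹ : Rˣ) : R), ?_, ?_⟩,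
      rfl⟩
    · rw [MonoidAlgebra.single_mul_single, mul_inv_cancel, Units.mul_inv,
        MonoidAlgebra.one_def]
    · rw [MonoidAlgebra.single_mul_single, inv_mul_cancel, Units.inv_mul,
        MonoidAlgebra.one_def]
  have part2 : ∀ (u : Rˣ) (g₁ g₂ : G),
      x = MonoidAlgebra.single g₁ (u : R) - MonoidAlgebra.single g₂ (u : R) →
        Ideal.span {x} = Phi R (Subgroup.zpowers (g₁ * g₂⁻¹)) := by
    intro u g₁ g₂ hx
    rw [aux_Phi_zpowers, Ideal.span_singleton_eq_span_singleton]
    obtain ⟨w, hw⟩ := unit_single u g₂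
    refine Associated.symm ⟨w, ?_⟩
    rw [hw, MonoidAlgebra.of_apply, MonoidAlgebra.one_def, sub_mul,
      MonoidAlgebra.single_mul_single, MonoidAlgebra.single_mul_single, one_mul, one_mul,
      inv_mul_cancel_right, hx]
  refine ⟨⟨?_, ?_⟩, part2⟩
  · rintro ⟨N, hN, hspan⟩
    obtain ⟨h, rfl⟩ := aux_subgroup_cyclic N
    rw [aux_Phi_zpowers, Ideal.span_singleton_eq_span_singleton] at hspan
    obtain ⟨w, hw⟩ := hspan
    obtain ⟨r, a, hwe⟩ := aux_units_triv (w⁻¹ : (MonoidAlgebra R G)ˣ).mul_inv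
    refine ⟨r, h * a, a, ?_⟩
    have hx : x = (MonoidAlgebra.of R G h - 1) * (w⁻¹ : (MonoidAlgebra R G)ˣ) := by
      rw [Units.eq_mul_inv_iff_mul_eq]
      exact hw
    rw [hx, hwe, MonoidAlgebra.of_apply, MonoidAlgebra.one_def, sub_mul,
      MonoidAlgebra.single_mul_single, MonoidAlgebra.single_mul_single, one_mul, one_mul]
  · rintro ⟨u, g₁, g₂, hx⟩
    refine ⟨Subgroup.zpowers (g₁ * g₂⁻¹), ?_, part2 u g₁ g₂ hx⟩
    rw [Ne, Subgroup.zpowers_eq_bot]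
    intro hcon
    apply hx0
    have : g₁ = g₂ := by
      have := mul_inv_eq_one.mp hcon
      exact this
    rw [hx, this, sub_self]
end
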